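/- arXiv:1707.03433 — 4 statements merged into one kernel-verified Lean document; each statement's English description precedes it below -/
import Mathlib

section
/- Let (X_n, f_n) be an inverse sequence of compact metric spaces with inverse limit X = lim(X_n, f_n), and let S be a compact metric space. If every X_n is homeomorphic to S and every bonding map f_{n+1} : X_{n+1} → X_n is a near-homeomorphism, then X is homeomorphic to S. -/
/-- The composite bonding map `f^{i+k}_i : X_{i+k} → X_i` of an inverse sequence
(the identity when `k = 0`). -/
def bond {X : ℕ → Type*} (f : ∀ n, X (n + 1) → X n) (i : ℕ) : ∀ k : ℕ, X (i + k) → X i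
  | 0 => id
  | k + 1 => fun x => bond f i k (f (i + k) x)

set_option linter.unusedSectionVars false

open Filter Topology

namespace BrownAux

variable {S : Type} [MetricSpace S] [CompactSpace S]

/-- Composite of bonding maps from level `i+k` down to level `i`. -/
def gB (g : ℕ → S → S) (i : ℕ) : ℕ → S → S
  | 0 => id
  | k + 1 => fun x => gB g i k (g (i + k) x)

lemma gB_succ (g : ℕ → S → S) (i k : ℕ) (x : S) :
    gB g i (k + 1) x = gB g i k (g (i + k) x) := rfl

lemma continuous_gB (g : ℕ → S → S) (hg : ∀ n, Continuous (g n)) (i k : ℕ) :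
    Continuous (gB g i k) := by
  induction k with
  | zero => exact continuous_id
  | succ k ih => exact ih.comp (hg (i + k))

lemma gB_thread (g : ℕ → S → S) {x : ℕ → S} (hx : ∀ n, g n (x (n + 1)) = x n) (i k : ℕ) :
    gB g i k (x (i + k)) = x i := by
  induction k with
  | zero => rfl
  | succ k ih =>
    show gB g i k (g (i + k) (x (i + k + 1))) = x i
    rw [hx (i + k), ih]

lemma gB_bottom (g : ℕ → S → S) (i k : ℕ) (x : S) :
    g i (gB g (i + 1) k x) = gB g i (k + 1) x := by
  induction k generalizing x with
  | zero => rfl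
  | succ k ih =>
    have h1 : g i (gB g (i + 1) (k + 1) x) = g i (gB g (i + 1) k (g (i + 1 + k) x)) := rfl
    have h2 : i + 1 + k = i + (k + 1) := by omega
    rw [h1, ih, h2, ← gB_succ]

/-- Composite of homeomorphisms from level `i+k` down to level `i`. -/
def hB (h : ℕ → S ≃ₜ S) (i : ℕ) : ℕ → S ≃ₜ S
  | 0 => Homeomorph.refl S
  | k + 1 => (h (i + k)).trans (hB h i k)

lemma hB_succ (h : ℕ → S ≃ₜ S) (i k : ℕ) (x : S) :
    hB h i (k + 1) x = hB h i k (h (i + k) x) := rfl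

lemma hB_zero (h : ℕ → S ≃ₜ S) (i : ℕ) (x : S) : hB h i 0 x = x := rfl

lemma hB_split (h : ℕ → S ≃ₜ S) (k j : ℕ) (x : S) :
    hB h 0 (k + j) x = hB h 0 k (hB h k j x) := by
  induction j generalizing x with
  | zero => rfl
  | succ j ih =>
    have h1 : hB h 0 (k + (j + 1)) x = hB h 0 (k + j) (h (0 + (k + j)) x) := rfl
    rw [h1, Nat.zero_add, ih, ← hB_succ]

lemma hB_congr {h1 h2 : ℕ → S ≃ₜ S} (i k : ℕ)
    (hagree : ∀ n, i ≤ n → n < i + k → h1 n = h2 n) (x : S) :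
    hB h1 i k x = hB h2 i k x := by
  induction k generalizing x with
  | zero => rfl
  | succ k ih =>
    rw [hB_succ, hB_succ, hagree (i + k) (Nat.le_add_right i k) (by omega),
      ih (fun n h1 h2 => hagree n h1 (by omega))]

/-- Realization of an infinite recursive choice. -/
lemma exists_seq {D : Type} [Inhabited D] (Q : ℕ → (ℕ → D) → Prop)
    (hdep : ∀ m (h1 h2 : ℕ → D), (∀ k, k ≤ m → h1 k = h2 k) → Q m h1 → Q m h2)
    (hstep : ∀ m hist, ∃ d : D, Q m (Function.update hist m d)) :
    ∃ seq : ℕ → D, ∀ m, Q m seq := by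
  let F : ℕ → (ℕ → D) := fun m =>
    Nat.rec (fun _ => default) (fun m Fm => Function.update Fm m (hstep m Fm).choose) m
  have hF1 : ∀ m, Q m (F (m + 1)) := fun m => (hstep m (F m)).choose_spec
  refine ⟨fun m => F (m + 1) m, fun m => hdep m (F (m + 1)) _ ?_ (hF1 m)⟩
  intro k hk
  induction m with
  | zero => interval_cases k; rfl
  | succ m ih =>
    rcases Nat.lt_or_ge k (m + 1) with h | h
    · have : F (m + 2) k = F (m + 1) k := Function.update_of_ne (by omega) _ _
      rw [this, ih (by omega)]
    · have : k = m + 1 := by omega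
      subst this; rfl

lemma unif_single (u : S → S) (hu : Continuous u) (ε : ℝ) (hε : 0 < ε) :
    ∃ δ : ℝ, 0 < δ ∧ ∀ a b : S, dist a b ≤ δ → dist (u a) (u b) ≤ ε := by
  obtain ⟨δ, hδ, H⟩ := Metric.uniformContinuous_iff.mp
    (CompactSpace.uniformContinuous_of_continuous hu) ε hε
  exact ⟨δ / 2, by positivity, fun a b hab => (H (lt_of_le_of_lt hab (by linarith))).le⟩

lemma unif_family (F : ℕ → S → S) (e : ℕ → ℝ) (m : ℕ)
    (hF : ∀ k, k ≤ m → Continuous (F k)) (he : ∀ k, k ≤ m → 0 < e k) :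
    ∃ δ : ℝ, 0 < δ ∧ ∀ k, k ≤ m → ∀ a b : S, dist a b ≤ δ → dist (F k a) (F k b) ≤ e k := by
  induction m with
  | zero =>
    obtain ⟨δ, hδ, H⟩ := unif_single (F 0) (hF 0 le_rfl) (e 0) (he 0 le_rfl)
    exact ⟨δ, hδ, fun k hk => by interval_cases k; exact H⟩
  | succ m ih =>
    obtain ⟨δ1, hδ1, H1⟩ := ih (fun k hk => hF k (by omega)) (fun k hk => he k (by omega))
    obtain ⟨δ2, hδ2, H2⟩ := unif_single (F (m + 1)) (hF _ le_rfl) (e (m + 1)) (he _ le_rfl)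
    refine ⟨min δ1 δ2, lt_min hδ1 hδ2, fun k hk a b hab => ?_⟩
    rcases Nat.lt_or_ge k (m + 1) with h | h
    · exact H1 k (by omega) a b (hab.trans (min_le_left _ _))
    · have : k = m + 1 := by omega
      subst this; exact H2 a b (hab.trans (min_le_right _ _))

end BrownAux

namespace BrownAux

variable {S : Type} [MetricSpace S] [CompactSpace S]

instance : Inhabited (S ≃ₜ S) := ⟨Homeomorph.refl S⟩
instance : Inhabited {r : ℝ // 0 < r} := ⟨⟨1, one_pos⟩⟩

/-- Step data: a homeomorphism `h_m` and positive reals `β_m, ε_m, δ_m`. -/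
abbrev Dat (S : Type) [MetricSpace S] [CompactSpace S] : Type :=
  (S ≃ₜ S) × {r : ℝ // 0 < r} × {r : ℝ // 0 < r} × {r : ℝ // 0 < r}

def hh (hist : ℕ → Dat S) (m : ℕ) : S ≃ₜ S := (hist m).1
def bβ (hist : ℕ → Dat S) (m : ℕ) : ℝ := ((hist m).2.1 : ℝ)
def bε (hist : ℕ → Dat S) (m : ℕ) : ℝ := ((hist m).2.2.1 : ℝ)
def bδ (hist : ℕ → Dat S) (m : ℕ) : ℝ := ((hist m).2.2.2 : ℝ)

lemma bβ_pos (hist : ℕ → Dat S) (m : ℕ) : 0 < bβ hist m := (hist m).2.1.2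
lemma bε_pos (hist : ℕ → Dat S) (m : ℕ) : 0 < bε hist m := (hist m).2.2.1.2
lemma bδ_pos (hist : ℕ → Dat S) (m : ℕ) : 0 < bδ hist m := (hist m).2.2.2.2

/-- The conditions required of the data at step `m` (relative to earlier data). -/
def Q (g : ℕ → S → S) (m : ℕ) (hist : ℕ → Dat S) : Prop :=
  bβ hist m ≤ (1/2) ^ m ∧
  (∀ m', m = m' + 1 → 2 * bβ hist m ≤ bβ hist m') ∧
  (∀ k j, k + j = m → ∀ a b : S, dist a b ≤ 4 * bβ hist m →
      dist (gB g k j a) (gB g k j b) ≤ (1/2) ^ m) ∧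
  (∀ a b : S, dist a b ≤ 2 * bβ hist m + bδ hist m →
      dist (hB (hh hist) 0 m a) (hB (hh hist) 0 m b) ≤ (1/2) ^ m) ∧
  (∀ k j, k + j = m → ∀ a b : S, dist a b ≤ bε hist m →
      dist (hB (hh hist) k j a) (hB (hh hist) k j b) ≤ bβ hist m) ∧
  (∀ k j, k + j = m → ∀ a b : S, dist a b ≤ bε hist m →
      dist (gB g k j a) (gB g k j b) ≤ bδ hist k / 2 ^ (j + 1)) ∧
  (∀ x : S, dist (g m x) (hh hist m x) < bε hist m)

lemma Q_dep (g : ℕ → S → S) (m : ℕ) (h1 h2 : ℕ → Dat S)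
    (hag : ∀ k, k ≤ m → h1 k = h2 k) (hQ : Q g m h1) : Q g m h2 := by
  have hv : ∀ k, k ≤ m →
      bβ h1 k = bβ h2 k ∧ bε h1 k = bε h2 k ∧ bδ h1 k = bδ h2 k ∧ hh h1 k = hh h2 k := by
    intro k hk
    rw [bβ, bε, bδ, hh, bβ, bε, bδ, hh, hag k hk]
    exact ⟨rfl, rfl, rfl, rfl⟩
  have hBeq : ∀ k j, k + j ≤ m → ∀ x : S, hB (hh h1) k j x = hB (hh h2) k j x := by
    intro k j hkj x
    exact hB_congr k j (fun n hn1 hn2 => (hv n (by omega)).2.2.2) x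
  obtain ⟨q1, q2, q3, q4, q5, q6, q7⟩ := hQ
  refine ⟨?_, ?_, ?_, ?_, ?_, ?_, ?_⟩
  · rw [← (hv m le_rfl).1]; exact q1
  · intro m' hm'
    rw [← (hv m le_rfl).1, ← (hv m' (by omega)).1]; exact q2 m' hm'
  · intro k j hkj a b hab
    rw [← (hv m le_rfl).1] at hab; exact q3 k j hkj a b hab
  · intro a b hab
    rw [← hBeq 0 m (by omega) a, ← hBeq 0 m (by omega) b]
    rw [← (hv m le_rfl).1, ← (hv m le_rfl).2.2.1] at hab
    exact q4 a b hab
  · intro k j hkj a b hab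
    rw [← hBeq k j (by omega) a, ← hBeq k j (by omega) b, ← (hv m le_rfl).1]
    rw [← (hv m le_rfl).2.1] at hab
    exact q5 k j hkj a b hab
  · intro k j hkj a b hab
    rw [← (hv k (by omega)).2.2.1]
    rw [← (hv m le_rfl).2.1] at hab
    exact q6 k j hkj a b hab
  · intro x
    rw [← (hv m le_rfl).2.2.2, ← (hv m le_rfl).2.1]
    exact q7 x

lemma step_exists (g : ℕ → S → S) (hg : ∀ n, Continuous (g n))
    (hnear : ∀ n, ∀ ε > (0:ℝ), ∃ h : S ≃ₜ S, ∀ x, dist (g n x) (h x) < ε)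
    (m : ℕ) (hist : ℕ → Dat S) :
    ∃ d : Dat S, Q g m (Function.update hist m d) := by
  have hpow : (0:ℝ) < (1/2) ^ m := by positivity
  obtain ⟨δb, δbpos, Hb⟩ := unif_family (fun k => gB g k (m - k)) (fun _ => (1/2) ^ m) m
    (fun k _ => continuous_gB g hg _ _) (fun k _ => hpow)
  obtain ⟨ρ, ρpos, Hc⟩ := unif_single (hB (hh hist) 0 m) (hB (hh hist) 0 m).continuous
    ((1/2) ^ m) hpow
  set β : ℝ := min (min ((1/2:ℝ) ^ m) (bβ hist (m - 1) / 2)) (min (ρ / 4) (δb / 5)) with hβdef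
  have βpos : 0 < β := by
    have h1 := bβ_pos hist (m - 1)
    exact lt_min (lt_min hpow (by linarith)) (lt_min (by linarith) (by linarith))
  set δ : ℝ := ρ / 2 with hδdef
  have δpos : 0 < δ := by positivity
  obtain ⟨δ1, δ1pos, H1⟩ := unif_family (fun k => (hB (hh hist) k (m - k) : S → S))
    (fun _ => β) m (fun k _ => (hB (hh hist) k (m - k)).continuous) (fun _ _ => βpos)
  obtain ⟨δ2, δ2pos, H2⟩ := unif_family (fun k => gB g k (m - k))
    (fun k => (if k = m then δ else bδ hist k) / 2 ^ ((m - k) + 1)) m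
    (fun k _ => continuous_gB g hg _ _)
    (fun k _ => by
      have h1 := bδ_pos hist k
      split_ifs <;> positivity)
  have εpos : 0 < min δ1 δ2 := lt_min δ1pos δ2pos
  obtain ⟨e, he⟩ := hnear m (min δ1 δ2) εpos
  refine ⟨⟨e, ⟨β, βpos⟩, ⟨min δ1 δ2, εpos⟩, ⟨δ, δpos⟩⟩, ?_⟩
  set d : Dat S := ⟨e, ⟨β, βpos⟩, ⟨min δ1 δ2, εpos⟩, ⟨δ, δpos⟩⟩ with hd
  set hist' := Function.update hist m d with hist'def
  have hm : hist' m = d := Function.update_self m d hist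
  have hlt : ∀ k, k < m → hist' k = hist k := by
    intro k hk
    rw [hist'def]
    exact Function.update_of_ne (Nat.ne_of_lt hk) _ _
  have aβ : bβ hist' m = β := by rw [bβ, hm]
  have aε : bε hist' m = min δ1 δ2 := by rw [bε, hm]
  have aδ : bδ hist' m = δ := by rw [bδ, hm]
  have ae : hh hist' m = e := by rw [hh, hm]
  have hBeq : ∀ k j, k + j ≤ m → ∀ x : S, hB (hh hist') k j x = hB (hh hist) k j x := by
    intro k j hkj x
    refine hB_congr k j (fun n hn1 hn2 => ?_) x
    rw [hh, hh, hlt n (by omega)]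
  have hβ1 : β ≤ (1/2) ^ m := le_trans (min_le_left _ _) (min_le_left _ _)
  have hβ2 : β ≤ bβ hist (m - 1) / 2 := le_trans (min_le_left _ _) (min_le_right _ _)
  have hβ3 : β ≤ ρ / 4 := le_trans (min_le_right _ _) (min_le_left _ _)
  have hβ4 : β ≤ δb / 5 := le_trans (min_le_right _ _) (min_le_right _ _)
  refine ⟨?_, ?_, ?_, ?_, ?_, ?_, ?_⟩
  · rw [aβ]; exact hβ1
  · intro m' hm'
    rw [aβ]
    have h1 : bβ hist' m' = bβ hist m' := by rw [bβ, bβ, hlt m' (by omega)]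
    rw [h1]
    have h2 : m' = m - 1 := by omega
    rw [h2]
    have := bβ_pos hist (m - 1)
    linarith
  · intro k j hkj a b hab
    rw [aβ] at hab
    have hj : m - k = j := by omega
    have := Hb k (by omega) a b (by linarith)
    rwa [hj] at this
  · intro a b hab
    rw [aβ, aδ] at hab
    rw [hBeq 0 m (by omega) a, hBeq 0 m (by omega) b]
    exact Hc a b (by rw [hδdef] at hab; linarith)
  · intro k j hkj a b hab
    rw [aε] at hab
    rw [aβ, hBeq k j (by omega) a, hBeq k j (by omega) b]
    have hj : m - k = j := by omega
    have := H1 k (by omega) a b (le_trans hab (min_le_left _ _))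
    rwa [hj] at this
  · intro k j hkj a b hab
    rw [aε] at hab
    have hj : m - k = j := by omega
    have := H2 k (by omega) a b (le_trans hab (min_le_right _ _))
    rw [hj] at this
    rcases Nat.lt_or_ge k m with hk | hk
    · have h1 : bδ hist' k = bδ hist k := by rw [bδ, bδ, hlt k hk]
      rw [h1]
      rwa [if_neg (by omega)] at this
    · have hkm : k = m := by omega
      subst hkm
      rw [aδ]
      rwa [if_pos rfl] at this
  · intro x
    rw [ae, aε]
    exact he x

end BrownAux

namespace BrownAux

open Filter Topology

variable {S : Type} [MetricSpace S] [CompactSpace S]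

lemma limS_homeo (g : ℕ → S → S) (hg : ∀ n, Continuous (g n))
    (hnear : ∀ n, ∀ ε > (0:ℝ), ∃ h : S ≃ₜ S, ∀ x, dist (g n x) (h x) < ε) :
    Nonempty ({x : ℕ → S // ∀ n, g n (x (n + 1)) = x n} ≃ₜ S) := by
  set L := {x : ℕ → S // ∀ n, g n (x (n + 1)) = x n} with hLdef
  have hLclosed : IsClosed {x : ℕ → S | ∀ n, g n (x (n + 1)) = x n} := by
    have : {x : ℕ → S | ∀ n, g n (x (n + 1)) = x n} =
        ⋂ n, {x : ℕ → S | g n (x (n + 1)) = x n} := by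
      ext x; simp [Set.mem_iInter]
    rw [this]
    exact isClosed_iInter fun n =>
      isClosed_eq ((hg n).comp (continuous_apply (n + 1))) (continuous_apply n)
  haveI : CompactSpace L := isCompact_iff_compactSpace.mp hLclosed.isCompact
  obtain ⟨seq, hQ⟩ := exists_seq (Q g) (Q_dep g) (step_exists g hg hnear)
  set h : ℕ → S ≃ₜ S := hh seq with hhdef
  have q1 : ∀ m, bβ seq m ≤ (1/2) ^ m := fun m => (hQ m).1
  have q2 : ∀ m, 2 * bβ seq (m + 1) ≤ bβ seq m := fun m => (hQ (m + 1)).2.1 m rfl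
  have q3 := fun m => (hQ m).2.2.1
  have q4 := fun m => (hQ m).2.2.2.1
  have q5 := fun m => (hQ m).2.2.2.2.1
  have q6 := fun m => (hQ m).2.2.2.2.2.1
  have q7 : ∀ m x, dist (g m x) (h m x) < bε seq m := fun m => (hQ m).2.2.2.2.2.2
  have βpos := bβ_pos seq
  have βmono : ∀ a b, a ≤ b → bβ seq b ≤ bβ seq a := by
    intro a b hab
    induction b, hab using Nat.le_induction with
    | base => exact le_rfl
    | succ b hb ih =>
      have h1 := q2 b
      have h2 := βpos (b + 1)
      linarith
  set ψ : ℕ → L → ℕ → S := fun k x j => hB h k j (x.1 (k + j)) with hψ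
  have ψstep : ∀ k (x : L) j, dist (ψ k x (j + 1)) (ψ k x j) ≤ bβ seq (k + j) := by
    intro k x j
    have h1 : ψ k x (j + 1) = hB h k j (h (k + j) (x.1 (k + j + 1))) := rfl
    have h2 : ψ k x j = hB h k j (g (k + j) (x.1 (k + j + 1))) := by
      rw [hψ]
      simp only
      rw [← x.2 (k + j)]
    rw [h1, h2]
    exact q5 (k + j) k j rfl _ _ (by rw [dist_comm]; exact (q7 (k + j) _).le)
  have ψchain : ∀ k (x : L) j J, j ≤ J →
      dist (ψ k x j) (ψ k x J) ≤ 2 * bβ seq (k + j) - 2 * bβ seq (k + J) := by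
    intro k x j J hjJ
    induction J, hjJ using Nat.le_induction with
    | base => simp
    | succ J hJ ih =>
      have h1 := ψstep k x J
      have h2 := q2 (k + J)
      have e1 : k + (J + 1) = k + J + 1 := rfl
      have h3 := dist_triangle (ψ k x j) (ψ k x J) (ψ k x (J + 1))
      rw [dist_comm (ψ k x (J + 1))] at h1
      rw [e1]
      linarith
  have hhalf : Tendsto (fun j : ℕ => ((1/2:ℝ)) ^ j) atTop (𝓝 0) :=
    tendsto_pow_atTop_nhds_zero_of_lt_one (by norm_num) (by norm_num)
  have hlim : ∀ k (x : L), ∃ z : S, Tendsto (ψ k x) atTop (𝓝 z) ∧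
      ∀ j, dist (ψ k x j) z ≤ 2 * bβ seq (k + j) := by
    intro k x
    have hcau : CauchySeq (ψ k x) := by
      apply cauchySeq_of_le_tendsto_0 (fun j => 2 * bβ seq (k + j))
      · intro n m N hn hm
        rcases le_total n m with hnm | hnm
        · have h1 := ψchain k x n m hnm
          have h2 := βpos (k + m)
          have h3 := βmono (k + N) (k + n) (by omega)
          linarith
        · have h1 := ψchain k x m n hnm
          have h2 := βpos (k + n)
          have h3 := βmono (k + N) (k + m) (by omega)
          rw [dist_comm]
          linarith
      · have h0 := hhalf.const_mul (2 * (1/2:ℝ) ^ k)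
        rw [mul_zero] at h0
        apply squeeze_zero (fun j => by have := βpos (k + j); positivity) (fun j => ?_) h0
        have h1 := q1 (k + j)
        rw [pow_add] at h1
        nlinarith [pow_pos (by norm_num : (0:ℝ) < 1/2) j, pow_pos (by norm_num : (0:ℝ) < 1/2) k]
    obtain ⟨z, hz⟩ := cauchySeq_tendsto_of_complete hcau
    refine ⟨z, hz, fun j => ?_⟩
    have hev : ∀ᶠ J in atTop, dist (ψ k x j) (ψ k x J) ≤ 2 * bβ seq (k + j) := by
      filter_upwards [eventually_ge_atTop j] with J hJ
      have h1 := ψchain k x j J hJ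
      have h2 := βpos (k + J)
      linarith
    exact le_of_tendsto (Tendsto.dist tendsto_const_nhds hz) hev
  choose G hG1 hG2 using hlim
  have Gcont : Continuous (G 0) := by
    have huni : TendstoUniformly (fun j (x : L) => ψ 0 x j) (G 0) atTop := by
      rw [Metric.tendstoUniformly_iff]
      intro εp hεp
      have h0 := hhalf.const_mul (2:ℝ)
      rw [mul_zero] at h0
      filter_upwards [h0.eventually (gt_mem_nhds hεp)] with j hj x
      have h1 := hG2 0 x j
      have h2 := q1 (0 + j)
      rw [Nat.zero_add] at h1 h2
      rw [dist_comm]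
      calc dist (ψ 0 x j) (G 0 x) ≤ 2 * bβ seq j := h1
        _ ≤ 2 * (1/2) ^ j := by linarith
        _ < εp := hj
    exact huni.continuous (Frequently.of_forall fun j =>
      ((hB h 0 j).continuous.comp ((continuous_apply (0 + j)).comp continuous_subtype_val)))
  have Gsplit : ∀ k (x : L), G 0 x = hB h 0 k (G k x) := by
    intro k x
    have hk : Tendsto (fun j : ℕ => k + j) atTop atTop :=
      tendsto_atTop_mono (fun j => Nat.le_add_left j k) tendsto_id
    have t2 : Tendsto (fun j => ψ 0 x (k + j)) atTop (𝓝 (G 0 x)) := (hG1 0 x).comp hk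
    have heq : ∀ j, ψ 0 x (k + j) = hB h 0 k (ψ k x j) := by
      intro j
      show hB h 0 (k + j) (x.1 (0 + (k + j))) = hB h 0 k (hB h k j (x.1 (k + j)))
      rw [Nat.zero_add, hB_split]
    have t3 : Tendsto (fun j => ψ 0 x (k + j)) atTop (𝓝 (hB h 0 k (G k x))) := by
      have := (((hB h 0 k).continuous.tendsto (G k x)).comp (hG1 k x))
      exact this.congr (fun j => (heq j).symm)
    exact tendsto_nhds_unique t2 t3
  have Gcoord : ∀ m (x : L), dist (x.1 m) (G m x) ≤ 2 * bβ seq m := by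
    intro m x
    have h1 := hG2 m x 0
    exact h1
  have Ginj : Function.Injective (G 0) := by
    intro x y hxy
    have hGm : ∀ m, G m x = G m y := fun m =>
      (hB h 0 m).injective (by rw [← Gsplit, ← Gsplit, hxy])
    apply Subtype.ext; funext k
    have key : ∀ j, dist (x.1 k) (y.1 k) ≤ (1/2) ^ (k + j) := by
      intro j
      have hxk : gB g k j (x.1 (k + j)) = x.1 k := gB_thread g x.2 k j
      have hyk : gB g k j (y.1 (k + j)) = y.1 k := gB_thread g y.2 k j
      have hd : dist (x.1 (k + j)) (y.1 (k + j)) ≤ 4 * bβ seq (k + j) := by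
        have h1 := Gcoord (k + j) x
        have h2 := Gcoord (k + j) y
        have h3 := hGm (k + j)
        have h1' : dist (x.1 (k + j)) (G (k + j) y) ≤ 2 * bβ seq (k + j) := by
          rw [← h3]; exact h1
        have h2' : dist (G (k + j) y) (y.1 (k + j)) ≤ 2 * bβ seq (k + j) := by
          rw [dist_comm]; exact h2
        have h4 := dist_triangle (x.1 (k + j)) (G (k + j) y) (y.1 (k + j))
        linarith
      have h5 := q3 (k + j) k j rfl _ _ hd
      rwa [hxk, hyk] at h5
    have h0 : Tendsto (fun j : ℕ => ((1/2:ℝ)) ^ (k + j)) atTop (𝓝 0) := by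
      have := hhalf.const_mul ((1/2:ℝ) ^ k)
      rw [mul_zero] at this
      exact this.congr (fun j => by rw [pow_add])
    have hle : dist (x.1 k) (y.1 k) ≤ 0 := ge_of_tendsto h0 (Eventually.of_forall key)
    exact dist_le_zero.mp hle
  have densA : ∀ k (t : S) j, ∃ s : S, dist (gB g k j s) t ≤ bδ seq k - bδ seq k / 2 ^ j := by
    intro k t j
    induction j with
    | zero =>
      refine ⟨t, ?_⟩
      simp [gB]
    | succ j ih =>
      obtain ⟨s, hs⟩ := ih
      refine ⟨(h (k + j)).symm s, ?_⟩
      have h1 : dist (g (k + j) ((h (k + j)).symm s)) s < bε seq (k + j) := by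
        have := q7 (k + j) ((h (k + j)).symm s)
        rwa [Homeomorph.apply_symm_apply] at this
      have h2 := q6 (k + j) k j rfl _ _ h1.le
      have h3 : gB g k (j + 1) ((h (k + j)).symm s) =
          gB g k j (g (k + j) ((h (k + j)).symm s)) := rfl
      rw [h3]
      have h4 := dist_triangle (gB g k j (g (k + j) ((h (k + j)).symm s))) (gB g k j s) t
      have h5 : (0:ℝ) < 2 ^ j := by positivity
      have h6 : bδ seq k / 2 ^ j = 2 * (bδ seq k / 2 ^ (j + 1)) := by
        rw [pow_succ]; ring
      linarith
  have densB : ∀ k (t : S), ∃ x : L, dist (x.1 k) t ≤ bδ seq k := by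
    intro k t
    set C : ℕ → Set (ℕ → S) := fun m =>
      {x | (∀ n, n < m → g n (x (n + 1)) = x n) ∧ dist (x k) t ≤ bδ seq k} with hCdef
    have hCcl : ∀ m, IsClosed (C m) := by
      intro m
      have : C m = (⋂ n, ⋂ _ : n < m, {x : ℕ → S | g n (x (n + 1)) = x n}) ∩
          {x : ℕ → S | dist (x k) t ≤ bδ seq k} := by
        ext x; simp [hCdef, Set.mem_iInter]
      rw [this]
      exact IsClosed.inter
        (isClosed_iInter fun n => isClosed_iInter fun _ =>
          isClosed_eq ((hg n).comp (continuous_apply (n + 1))) (continuous_apply n))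
        (isClosed_le ((continuous_apply k).dist continuous_const) continuous_const)
    have hCne : ∀ m, (C m).Nonempty := by
      intro m
      obtain ⟨s, hs⟩ := densA k t m
      refine ⟨fun n => if n ≤ k + m then gB g n (k + m - n) s else s, ?_, ?_⟩
      · intro n hn
        show g n (if n + 1 ≤ k + m then gB g (n + 1) (k + m - (n + 1)) s else s) =
          if n ≤ k + m then gB g n (k + m - n) s else s
        have hn1 : n + 1 ≤ k + m := by omega
        have hn2 : n ≤ k + m := by omega
        rw [if_pos hn1, if_pos hn2]
        have h1 := gB_bottom g n (k + m - (n + 1)) s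
        have h2 : k + m - (n + 1) + 1 = k + m - n := by omega
        rw [h2] at h1
        exact h1
      · show dist (if k ≤ k + m then gB g k (k + m - k) s else s) t ≤ bδ seq k
        have hk : k ≤ k + m := by omega
        rw [if_pos hk]
        have h2 : k + m - k = m := by omega
        rw [h2]
        have h3 : (0:ℝ) < 2 ^ m := by positivity
        have h4 := bδ_pos seq k
        have h5 : 0 < bδ seq k / 2 ^ m := by positivity
        linarith
    have hCdec : ∀ m, C (m + 1) ⊆ C m := by
      intro m x hx
      exact ⟨fun n hn => hx.1 n (by omega), hx.2⟩
    obtain ⟨x, hx⟩ := IsCompact.nonempty_iInter_of_sequence_nonempty_isCompact_isClosed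
      C hCdec hCne ((hCcl 0).isCompact) hCcl
    rw [Set.mem_iInter] at hx
    refine ⟨⟨x, fun n => (hx (n + 1)).1 n (by omega)⟩, (hx 0).2⟩
  have Gsurj : Function.Surjective (G 0) := by
    intro y
    have hcl : IsClosed (Set.range (G 0)) := (isCompact_range Gcont).isClosed
    have hy : y ∈ closure (Set.range (G 0)) := by
      rw [Metric.mem_closure_iff]
      intro εp hεp
      obtain ⟨k, hk⟩ := exists_pow_lt_of_lt_one hεp (by norm_num : (1/2:ℝ) < 1)
      obtain ⟨x, hx⟩ := densB k ((hB h 0 k).symm y)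
      refine ⟨G 0 x, Set.mem_range_self x, ?_⟩
      have h1 : dist (G k x) ((hB h 0 k).symm y) ≤ 2 * bβ seq k + bδ seq k := by
        have h2 := Gcoord k x
        have h4 := dist_triangle (G k x) (x.1 k) ((hB h 0 k).symm y)
        rw [dist_comm (G k x) (x.1 k)] at h4
        linarith
      have h3 := q4 k _ _ h1
      rw [Homeomorph.apply_symm_apply] at h3
      rw [← Gsplit k x] at h3
      rw [dist_comm]
      exact lt_of_le_of_lt h3 hk
    rwa [hcl.closure_eq] at hy
  let E : L ≃ S := Equiv.ofBijective (G 0) ⟨Ginj, Gsurj⟩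
  exact ⟨Continuous.homeoOfEquivCompactToT2 (f := E) Gcont⟩

end BrownAux

/-- Brown's theorem: the inverse limit of an inverse sequence of compact metric spaces,
all homeomorphic to a fixed compact metric space `S`, with near-homeomorphisms as
bonding maps, is homeomorphic to `S`. -/
theorem brown_inverse_limit_near_homeomorphism
    (X : ℕ → Type) [∀ n, MetricSpace (X n)] [∀ n, CompactSpace (X n)]
    (f : ∀ n, X (n + 1) → X n) (hf : ∀ n, Continuous (f n))
    (S : Type) [MetricSpace S] [CompactSpace S]
    (hXS : ∀ n, Nonempty (X n ≃ₜ S))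
    (hnear : ∀ n, ∀ ε > (0 : ℝ), ∃ h : X (n + 1) ≃ₜ X n, ∀ x, dist (f n x) (h x) < ε) :
    Nonempty ({x : ∀ n, X n // ∀ n, f n (x (n + 1)) = x n} ≃ₜ S) := by
  have e : ∀ n, X n ≃ₜ S := fun n => (hXS n).some
  set g : ℕ → S → S := fun n s => e n (f n ((e (n + 1)).symm s)) with hgdef
  have hgc : ∀ n, Continuous (g n) := fun n =>
    ((e n).continuous.comp (hf n)).comp (e (n + 1)).symm.continuous
  have hgnear : ∀ n, ∀ ε > (0:ℝ), ∃ h : S ≃ₜ S, ∀ s, dist (g n s) (h s) < ε := by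
    intro n ε hε
    obtain ⟨δ, hδ, H⟩ := Metric.uniformContinuous_iff.mp
      (CompactSpace.uniformContinuous_of_continuous (e n).continuous) ε hε
    obtain ⟨h, hh⟩ := hnear n δ hδ
    refine ⟨((e (n + 1)).symm.trans h).trans (e n), fun s => ?_⟩
    show dist (g n s) (e n (h ((e (n + 1)).symm s))) < ε
    exact H (hh ((e (n + 1)).symm s))
  obtain ⟨E⟩ := BrownAux.limS_homeo g hgc hgnear
  let F : {x : ∀ n, X n // ∀ n, f n (x (n + 1)) = x n} →
      {x : ℕ → S // ∀ n, g n (x (n + 1)) = x n} :=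
    fun x => ⟨fun n => e n (x.1 n), by
      intro n
      show e n (f n ((e (n + 1)).symm (e (n + 1) (x.1 (n + 1))))) = e n (x.1 n)
      rw [Homeomorph.symm_apply_apply, x.2 n]⟩
  let Finv : {x : ℕ → S // ∀ n, g n (x (n + 1)) = x n} →
      {x : ∀ n, X n // ∀ n, f n (x (n + 1)) = x n} :=
    fun y => ⟨fun n => (e n).symm (y.1 n), by
      intro n
      show f n ((e (n + 1)).symm (y.1 (n + 1))) = (e n).symm (y.1 n)
      have h3 : e n (f n ((e (n + 1)).symm (y.1 (n + 1)))) = y.1 n := y.2 n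
      rw [← h3, Homeomorph.symm_apply_apply]⟩
  have hF1 : ∀ x, Finv (F x) = x := by
    intro x
    apply Subtype.ext; funext n
    exact (e n).symm_apply_apply _
  have hF2 : ∀ y, F (Finv y) = y := by
    intro y
    apply Subtype.ext; funext n
    exact (e n).apply_symm_apply _
  have hFc : Continuous F := by
    apply Continuous.subtype_mk
    exact continuous_pi fun n =>
      (e n).continuous.comp ((continuous_apply n).comp continuous_subtype_val)
  have hFinvc : Continuous Finv := by
    apply Continuous.subtype_mk
    exact continuous_pi fun n =>
      (e n).symm.continuous.comp ((continuous_apply n).comp continuous_subtype_val)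
  exact ⟨(Homeomorph.mk ⟨F, Finv, hF1, hF2⟩ hFc hFinvc).trans E⟩
end

section
/- Let (X_n, f_n) be an inverse sequence of compact metric spaces and let A_n ⊆ X_n be compact subsets with f_{n+1}(A_{n+1}) ⊆ A_n for all n. Let X = lim(X_n, f_n) be the inverse limit and A = { x ∈ X : x_n ∈ A_n for all n }. Let S be a compact metric space and T ⊆ S a compact subset. If for every n there is a homeomorphism of pairs (X_n, A_n) → (S, T), and every bonding map f_{n+1} : (X_{n+1}, A_{n+1}) → (X_n, A_n) is a near-homeomorphism of pairs, then there is a homeomorphism φ : X → S with φ(A) = T. -/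
open Metric Set Filter Topology

set_option linter.unusedSectionVars false
namespace BrownProof

lemma proj_surj : ∀ (n : ℕ) (Y : ℕ → Type) (g : ∀ k, Y (k + 1) → Y k),
    (∀ k, Function.Surjective (g k)) → ∀ a : Y n,
      ∃ x : ∀ k, Y k, (∀ k, g k (x (k + 1)) = x k) ∧ x n = a := by
  intro n
  induction n with
  | zero =>
    intro Y g hs a
    choose s hsec using hs
    exact ⟨fun k => Nat.rec a (fun k xk => s k xk) k, fun k => hsec k _, rfl⟩
  | succ n ih =>
    intro Y g hs a
    obtain ⟨y, hy, hyn⟩ := ih (fun k => Y (k + 1)) (fun k => g (k + 1)) (fun k => hs (k + 1)) a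
    refine ⟨fun k => Nat.rec (g 0 (y 0)) (fun k _ => y k) k, fun k => ?_, hyn⟩
    cases k with
    | zero => rfl
    | succ k => exact hy k

section

variable {X : ℕ → Type} [∀ n, MetricSpace (X n)] [∀ n, CompactSpace (X n)]
  {A : ∀ n, Set (X n)} {f : ∀ n, X (n + 1) → X n}

abbrev Xlim (f : ∀ n, X (n + 1) → X n) : Type :=
  {x : ∀ n, X n // ∀ n, f n (x (n + 1)) = x n}

lemma compactSpace_Xlim (hf : ∀ n, Continuous (f n)) : CompactSpace (Xlim f) := by
  have heq : {x : ∀ n, X n | ∀ n, f n (x (n + 1)) = x n}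
      = ⋂ n, {x : ∀ n, X n | f n (x (n + 1)) = x n} := by ext; simp
  have hcl : IsClosed {x : ∀ n, X n | ∀ n, f n (x (n + 1)) = x n} := by
    rw [heq]
    exact isClosed_iInter fun n =>
      isClosed_eq ((hf n).comp (continuous_apply (n + 1))) (continuous_apply n)
  exact isCompact_iff_compactSpace.mp hcl.isCompact

lemma coord_eq (x y : Xlim f) :
    ∀ n, x.1 n = y.1 n → ∀ k, k ≤ n → x.1 k = y.1 k := by
  intro n
  induction n with
  | zero =>
    intro h k hk
    exact Nat.le_zero.mp hk ▸ h
  | succ n ih =>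
    intro h k hk
    rcases Nat.eq_or_lt_of_le hk with rfl | hk'
    · exact h
    · refine ih ?_ k (Nat.lt_succ_iff.mp hk')
      rw [← x.2 n, ← y.2 n, h]

structure Aux (A : ∀ n, Set (X n)) (f : ∀ n, X (n + 1) → X n) (n : ℕ) where
  g : X n ≃ₜ X 0
  himg : ⇑g '' A n = A 0
  δ : ℝ
  δpos : 0 < δ
  hinj : ∀ x y : Xlim f, dist (g (x.1 n)) (g (y.1 n)) ≤ 3 * δ →
    ∀ k, k ≤ n → dist (x.1 k) (y.1 k) ≤ (1/2 : ℝ) ^ n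

lemma exists_delta (hf : ∀ n, Continuous (f n)) (n : ℕ) (g : X n ≃ₜ X 0)
    (bound : ℝ) (hb : 0 < bound) :
    ∃ δ : ℝ, 0 < δ ∧ δ ≤ bound ∧ ∀ x y : Xlim f,
      dist (g (x.1 n)) (g (y.1 n)) ≤ 3 * δ →
      ∀ k, k ≤ n → dist (x.1 k) (y.1 k) ≤ (1/2 : ℝ) ^ n := by
  haveI := compactSpace_Xlim hf
  set c : ℝ := (1/2 : ℝ) ^ n with hc
  have hcpos : 0 < c := by positivity
  set B : Set (Xlim f × Xlim f) :=
    {p | ∃ k, k ≤ n ∧ c ≤ dist (p.1.1 k) (p.2.1 k)} with hB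
  have hco : ∀ k, Continuous fun p : Xlim f × Xlim f => dist (p.1.1 k) (p.2.1 k) :=
    fun k => Continuous.dist
      ((continuous_apply k).comp (continuous_subtype_val.comp continuous_fst))
      ((continuous_apply k).comp (continuous_subtype_val.comp continuous_snd))
  have hBclosed : IsClosed B := by
    have hBu : B = ⋃ k ∈ Finset.range (n + 1),
        {p : Xlim f × Xlim f | c ≤ dist (p.1.1 k) (p.2.1 k)} := by
      ext p; simp [hB, Nat.lt_succ_iff]
    rw [hBu]
    exact isClosed_biUnion_finset fun k _ =>
      isClosed_le continuous_const (hco k)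
  have hFcont : Continuous fun p : Xlim f × Xlim f =>
      dist (g (p.1.1 n)) (g (p.2.1 n)) := by
    refine Continuous.dist ?_ ?_
    · exact g.continuous.comp ((continuous_apply n).comp (continuous_subtype_val.comp continuous_fst))
    · exact g.continuous.comp ((continuous_apply n).comp (continuous_subtype_val.comp continuous_snd))
  by_cases hBne : B.Nonempty
  · obtain ⟨p₀, hp₀, hmin⟩ := (hBclosed.isCompact).exists_isMinOn hBne hFcont.continuousOn
    set m : ℝ := dist (g (p₀.1.1 n)) (g (p₀.2.1 n)) with hm
    have hmpos : 0 < m := by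
      rcases lt_or_eq_of_le (dist_nonneg : (0:ℝ) ≤ m) with h | h
      · exact h
      · exfalso
        have heqn : p₀.1.1 n = p₀.2.1 n := g.injective (dist_eq_zero.mp h.symm)
        obtain ⟨k, hk, hck⟩ := hp₀
        have : p₀.1.1 k = p₀.2.1 k := coord_eq p₀.1 p₀.2 n heqn k hk
        rw [this, dist_self] at hck
        linarith
    refine ⟨min bound (m / 4), lt_min hb (by linarith), min_le_left _ _, ?_⟩
    intro x y hxy k hk
    by_contra hlt
    have hmem : (x, y) ∈ B := ⟨k, hk, (not_le.mp hlt).le⟩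
    have h1 : m ≤ dist (g (x.1 n)) (g (y.1 n)) := hmin hmem
    have h2 : min bound (m / 4) ≤ m / 4 := min_le_right _ _
    linarith
  · refine ⟨bound, hb, le_refl _, ?_⟩
    intro x y _ k hk
    by_contra hlt
    exact hBne ⟨(x, y), k, hk, (not_le.mp hlt).le⟩

lemma step (hf : ∀ n, Continuous (f n))
    (hnear : ∀ n, ∀ ε > (0 : ℝ), ∃ h : X (n + 1) ≃ₜ X n,
      ⇑h '' A (n + 1) = A n ∧ ∀ x, dist (f n x) (h x) < ε)
    (n : ℕ) (a : Aux A f n) :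
    ∃ b : Aux A f (n + 1), b.δ ≤ a.δ / 2 ∧
      ∀ z : X (n + 1), dist (b.g z) (a.g (f n z)) ≤ a.δ / 2 := by
  have hu := CompactSpace.uniformContinuous_of_continuous a.g.continuous
  rw [Metric.uniformContinuous_iff] at hu
  obtain ⟨ε, hε, hmod⟩ := hu (a.δ / 2) (by linarith [a.δpos])
  obtain ⟨h, himgh, hclose⟩ := hnear n ε hε
  obtain ⟨δ, hδpos, hδle, hinj⟩ := exists_delta hf (n + 1) (h.trans a.g) (a.δ / 2)
    (by linarith [a.δpos])
  refine ⟨⟨h.trans a.g, ?_, δ, hδpos, hinj⟩, hδle, ?_⟩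
  · show ⇑(h.trans a.g) '' A (n + 1) = A 0
    rw [show ⇑(h.trans a.g) = ⇑a.g ∘ ⇑h from rfl, Set.image_comp, himgh, a.himg]
  · intro z
    have h1 : dist (a.g (f n z)) (a.g (h z)) < a.δ / 2 := hmod (hclose z)
    have h2 : (h.trans a.g) z = a.g (h z) := rfl
    rw [h2, dist_comm]
    exact h1.le

noncomputable def base0 (hf : ∀ n, Continuous (f n)) (A : ∀ n, Set (X n)) : Aux A f 0 :=
  ⟨Homeomorph.refl (X 0), by simp,
    (exists_delta hf 0 (Homeomorph.refl (X 0)) 1 one_pos).choose,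
    (exists_delta hf 0 (Homeomorph.refl (X 0)) 1 one_pos).choose_spec.1,
    (exists_delta hf 0 (Homeomorph.refl (X 0)) 1 one_pos).choose_spec.2.2⟩

noncomputable def seq (hf : ∀ n, Continuous (f n))
    (hnear : ∀ n, ∀ ε > (0 : ℝ), ∃ h : X (n + 1) ≃ₜ X n,
      ⇑h '' A (n + 1) = A n ∧ ∀ x, dist (f n x) (h x) < ε) : ∀ n, Aux A f n
  | 0 => base0 hf A
  | n + 1 => (step hf hnear n (seq hf hnear n)).choose

lemma seq_succ_spec (hf : ∀ n, Continuous (f n))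
    (hnear : ∀ n, ∀ ε > (0 : ℝ), ∃ h : X (n + 1) ≃ₜ X n,
      ⇑h '' A (n + 1) = A n ∧ ∀ x, dist (f n x) (h x) < ε) (n : ℕ) :
    (seq hf hnear (n + 1)).δ ≤ (seq hf hnear n).δ / 2 ∧
      ∀ z : X (n + 1), dist ((seq hf hnear (n + 1)).g z)
        ((seq hf hnear n).g (f n z)) ≤ (seq hf hnear n).δ / 2 :=
  (step hf hnear n (seq hf hnear n)).choose_spec

lemma fsurj (hf : ∀ n, Continuous (f n))
    (hnear : ∀ n, ∀ ε > (0 : ℝ), ∃ h : X (n + 1) ≃ₜ X n,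
      ⇑h '' A (n + 1) = A n ∧ ∀ x, dist (f n x) (h x) < ε) (k : ℕ) :
    Function.Surjective (f k) := by
  intro y
  by_contra hy
  have hyr : y ∉ Set.range (f k) := by
    rintro ⟨x, rfl⟩; exact hy ⟨x, rfl⟩
  obtain ⟨h₁, -, -⟩ := hnear k 1 one_pos
  have hne : (Set.range (f k)).Nonempty := ⟨f k (h₁.symm y), Set.mem_range_self _⟩
  have hcl : IsClosed (Set.range (f k)) := (isCompact_range (hf k)).isClosed
  have hpos : 0 < infDist y (Set.range (f k)) :=
    (hcl.notMem_iff_infDist_pos hne).mp hyr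
  obtain ⟨h, -, hclose⟩ := hnear k _ hpos
  have h1 : dist (f k (h.symm y)) y < infDist y (Set.range (f k)) := by
    have := hclose (h.symm y)
    rwa [h.apply_symm_apply] at this
  have h2 : infDist y (Set.range (f k)) ≤ dist y (f k (h.symm y)) :=
    infDist_le_dist_of_mem (Set.mem_range_self _)
  rw [dist_comm] at h1
  linarith

lemma fAsurj (hf : ∀ n, Continuous (f n)) (hA : ∀ n, IsCompact (A n))
    (hnear : ∀ n, ∀ ε > (0 : ℝ), ∃ h : X (n + 1) ≃ₜ X n,
      ⇑h '' A (n + 1) = A n ∧ ∀ x, dist (f n x) (h x) < ε) (k : ℕ) :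
    Set.SurjOn (f k) (A (k + 1)) (A k) := by
  intro y hy
  by_contra hy'
  obtain ⟨h₁, himg₁, -⟩ := hnear k 1 one_pos
  have hA1ne : (A (k + 1)).Nonempty := by
    rw [← himg₁] at hy
    obtain ⟨z, hz, -⟩ := hy
    exact ⟨z, hz⟩
  have hne : (f k '' A (k + 1)).Nonempty := hA1ne.image _
  have hcl : IsClosed (f k '' A (k + 1)) := ((hA (k + 1)).image (hf k)).isClosed
  have hpos : 0 < infDist y (f k '' A (k + 1)) :=
    (hcl.notMem_iff_infDist_pos hne).mp hy'
  obtain ⟨h, himg, hclose⟩ := hnear k _ hpos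
  have hyh : y ∈ ⇑h '' A (k + 1) := himg ▸ hy
  obtain ⟨x, hx, hhx⟩ := hyh
  have h1 : dist (f k x) y < infDist y (f k '' A (k + 1)) := by
    have := hclose x
    rwa [hhx] at this
  have h2 : infDist y (f k '' A (k + 1)) ≤ dist y (f k x) :=
    infDist_le_dist_of_mem (Set.mem_image_of_mem _ hx)
  rw [dist_comm] at h1
  linarith

end

end BrownProof

/-- Brown's theorem for pairs: the inverse limit of an inverse sequence of pairs of
compact metric spaces, all pair-homeomorphic to a fixed pair `(S, T)`, with
near-homeomorphisms of pairs as bonding maps, is pair-homeomorphic to `(S, T)`. -/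
theorem brown_inverse_limit_near_homeomorphism_pairs
    (X : ℕ → Type) [∀ n, MetricSpace (X n)] [∀ n, CompactSpace (X n)]
    (A : ∀ n, Set (X n)) (hA : ∀ n, IsCompact (A n))
    (f : ∀ n, X (n + 1) → X n) (hf : ∀ n, Continuous (f n))
    (hfA : ∀ n, Set.MapsTo (f n) (A (n + 1)) (A n))
    (S : Type) [MetricSpace S] [CompactSpace S]
    (T : Set S) (hT : IsCompact T)
    (hXS : ∀ n, ∃ h : X n ≃ₜ S, h '' A n = T)
    (hnear : ∀ n, ∀ ε > (0 : ℝ), ∃ h : X (n + 1) ≃ₜ X n,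
      h '' A (n + 1) = A n ∧ ∀ x, dist (f n x) (h x) < ε) :
    ∃ φ : {x : ∀ n, X n // ∀ n, f n (x (n + 1)) = x n} ≃ₜ S,
      φ '' {x : {x : ∀ n, X n // ∀ n, f n (x (n + 1)) = x n} | ∀ n, x.1 n ∈ A n} = T := by

  classical
  open BrownProof Metric Set Filter Topology in
  haveI := BrownProof.compactSpace_Xlim hf
  set σ : ∀ n, BrownProof.Aux A f n := BrownProof.seq hf hnear with hσ
  set Gn : ℕ → BrownProof.Xlim f → X 0 := fun n x => (σ n).g (x.1 n) with hGn
  have hδpos : ∀ n, 0 < (σ n).δ := fun n => (σ n).δpos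
  have hδhalf : ∀ n, (σ (n + 1)).δ ≤ (σ n).δ / 2 := fun n =>
    (BrownProof.seq_succ_spec hf hnear n).1
  have hGnstep : ∀ n x, dist (Gn (n + 1) x) (Gn n x) ≤ (σ n).δ / 2 := by
    intro n x
    have h2 := (BrownProof.seq_succ_spec hf hnear n).2 (x.1 (n + 1))
    rw [x.2 n] at h2
    exact h2
  have hδle : ∀ n m, (σ (n + m)).δ ≤ (σ n).δ * (1 / 2 : ℝ) ^ m := by
    intro n m
    induction m with
    | zero => simp
    | succ m ih =>
      have h1 := hδhalf (n + m)
      have : (σ n).δ * (1 / 2 : ℝ) ^ (m + 1) = (σ n).δ * (1 / 2 : ℝ) ^ m / 2 := by ring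
      rw [this]
      calc (σ (n + (m + 1))).δ ≤ (σ (n + m)).δ / 2 := h1
        _ ≤ (σ n).δ * (1 / 2 : ℝ) ^ m / 2 := by linarith
  have hδ0le : ∀ n, (σ n).δ ≤ (σ 0).δ * (1 / 2 : ℝ) ^ n := by
    intro n
    have := hδle 0 n
    rwa [Nat.zero_add] at this
  have hcauchy : ∀ x, CauchySeq (fun n => Gn n x) := by
    intro x
    refine cauchySeq_of_le_geometric (1 / 2 : ℝ) ((σ 0).δ) (by norm_num) fun n => ?_
    rw [dist_comm]
    calc dist (Gn (n + 1) x) (Gn n x) ≤ (σ n).δ / 2 := hGnstep n x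
      _ ≤ (σ n).δ := by linarith [hδpos n]
      _ ≤ (σ 0).δ * (1 / 2 : ℝ) ^ n := hδ0le n
  have hGlim : ∀ x : BrownProof.Xlim f, ∃ z : X 0,
      Filter.Tendsto (fun n => Gn n x) Filter.atTop (nhds z) :=
    fun x => cauchySeq_tendsto_of_complete (hcauchy x)
  set G : BrownProof.Xlim f → X 0 := fun x => (hGlim x).choose with hG
  have hGt : ∀ x, Filter.Tendsto (fun n => Gn n x) Filter.atTop (nhds (G x)) :=
    fun x => (hGlim x).choose_spec
  have hGnm : ∀ x n m, dist (Gn n x) (Gn (n + m) x) ≤ (σ n).δ * (1 - (1 / 2 : ℝ) ^ m) := by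
    intro x n m
    induction m with
    | zero => simp
    | succ m ih =>
      have h1 : dist (Gn (n + m) x) (Gn (n + m + 1) x) ≤ (σ (n + m)).δ / 2 := by
        rw [dist_comm]; exact hGnstep (n + m) x
      have h2 := hδle n m
      calc dist (Gn n x) (Gn (n + (m + 1)) x)
          ≤ dist (Gn n x) (Gn (n + m) x) + dist (Gn (n + m) x) (Gn (n + m + 1) x) :=
            dist_triangle _ _ _
        _ ≤ (σ n).δ * (1 - (1 / 2 : ℝ) ^ m) + (σ n).δ * (1 / 2 : ℝ) ^ m / 2 := by linarith
        _ = (σ n).δ * (1 - (1 / 2 : ℝ) ^ (m + 1)) := by ring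
  have hGdist : ∀ x n, dist (Gn n x) (G x) ≤ (σ n).δ := by
    intro x n
    have heq : (fun m => Gn (n + m) x) = fun m => Gn (m + n) x := by
      funext m; rw [Nat.add_comm]
    have ht : Filter.Tendsto (fun m => dist (Gn n x) (Gn (n + m) x)) Filter.atTop
        (nhds (dist (Gn n x) (G x))) := by
      refine Filter.Tendsto.dist tendsto_const_nhds ?_
      rw [heq]
      exact (hGt x).comp (Filter.tendsto_add_atTop_nat n)
    refine le_of_tendsto ht (Filter.Eventually.of_forall fun m => ?_)
    have h1 := hGnm x n m
    have h2 : (0:ℝ) < (1 / 2 : ℝ) ^ m := by positivity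
    nlinarith [hδpos n]
  have hδ0 : Filter.Tendsto (fun n => (σ n).δ) Filter.atTop (nhds 0) := by
    have hg : Filter.Tendsto (fun n : ℕ => (σ 0).δ * (1 / 2 : ℝ) ^ n) Filter.atTop (nhds 0) := by
      have := (tendsto_pow_atTop_nhds_zero_of_lt_one (by norm_num : (0:ℝ) ≤ 1/2)
        (by norm_num : (1/2:ℝ) < 1)).const_mul ((σ 0).δ)
      simpa using this
    exact squeeze_zero (fun n => (hδpos n).le) hδ0le hg
  have hGncont : ∀ n, Continuous (Gn n) := fun n =>
    ((σ n).g.continuous).comp ((continuous_apply n).comp continuous_subtype_val)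
  have hGcont : Continuous G := by
    have hGU : TendstoUniformly Gn G Filter.atTop := by
      rw [Metric.tendstoUniformly_iff]
      intro ε hε
      filter_upwards [hδ0.eventually_lt_const hε] with n hn x
      calc dist (G x) (Gn n x) = dist (Gn n x) (G x) := dist_comm _ _
        _ ≤ (σ n).δ := hGdist x n
        _ < ε := hn
    exact hGU.continuous (Filter.Eventually.of_forall hGncont).frequently
  have hGinj : Function.Injective G := by
    intro x y hxy
    have key : ∀ k, x.1 k = y.1 k := by
      intro k
      have hdk : ∀ n, k ≤ n → dist (x.1 k) (y.1 k) ≤ (1 / 2 : ℝ) ^ n := by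
        intro n hk
        refine (σ n).hinj x y ?_ k hk
        have h1 : dist (Gn n x) (Gn n y) ≤ dist (Gn n x) (G x) + dist (G x) (Gn n y) :=
          dist_triangle _ _ _
        have h2 : dist (G x) (Gn n y) = dist (Gn n y) (G y) := by rw [hxy, dist_comm]
        have h3 := hGdist x n
        have h4 := hGdist y n
        have : dist (Gn n x) (Gn n y) ≤ 3 * (σ n).δ := by
          rw [h2] at h1; linarith [hδpos n]
        exact this
      have h0 : dist (x.1 k) (y.1 k) ≤ 0 := by
        refine ge_of_tendsto (tendsto_pow_atTop_nhds_zero_of_lt_one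
          (by norm_num : (0:ℝ) ≤ 1/2) (by norm_num : (1/2:ℝ) < 1)) ?_
        filter_upwards [Filter.eventually_ge_atTop k] with n hn
        exact hdk n hn
      exact eq_of_dist_eq_zero (le_antisymm h0 dist_nonneg)
    exact Subtype.ext (funext key)
  have hsurjf : ∀ k, Function.Surjective (f k) := BrownProof.fsurj hf hnear
  have hGsurj : Function.Surjective G := by
    intro z
    have hzc : z ∈ closure (Set.range G) := by
      rw [Metric.mem_closure_iff]
      intro ε hε
      obtain ⟨n, hn⟩ : ∃ n, (σ n).δ < ε := (hδ0.eventually_lt_const hε).exists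
      obtain ⟨x, hxc, hxn⟩ := BrownProof.proj_surj n X f hsurjf ((σ n).g.symm z)
      refine ⟨G ⟨x, hxc⟩, Set.mem_range_self _, ?_⟩
      have h2 : Gn n ⟨x, hxc⟩ = z := by
        show (σ n).g (x n) = z
        rw [hxn, (σ n).g.apply_symm_apply]
      calc dist z (G ⟨x, hxc⟩) = dist (Gn n ⟨x, hxc⟩) (G ⟨x, hxc⟩) := by rw [h2]
        _ ≤ (σ n).δ := hGdist _ n
        _ < ε := hn
    rwa [(isCompact_range hGcont).isClosed.closure_eq, Set.mem_range] at hzc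
  have hAlimcl : IsClosed {x : BrownProof.Xlim f | ∀ n, x.1 n ∈ A n} := by
    have heq : {x : BrownProof.Xlim f | ∀ n, x.1 n ∈ A n}
        = ⋂ n, (fun x : BrownProof.Xlim f => x.1 n) ⁻¹' (A n) := by ext; simp
    rw [heq]
    exact isClosed_iInter fun n =>
      ((hA n).isClosed).preimage ((continuous_apply n).comp continuous_subtype_val)
  have hAlim : IsCompact {x : BrownProof.Xlim f | ∀ n, x.1 n ∈ A n} := hAlimcl.isCompact
  have hGA0 : G '' {x : BrownProof.Xlim f | ∀ n, x.1 n ∈ A n} = A 0 := by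
    apply Set.Subset.antisymm
    · rintro - ⟨x, hx, rfl⟩
      refine (hA 0).isClosed.mem_of_tendsto (hGt x) (Filter.Eventually.of_forall fun n => ?_)
      show (σ n).g (x.1 n) ∈ A 0
      rw [← (σ n).himg]
      exact Set.mem_image_of_mem _ (hx n)
    · intro z hz
      have hcomp : IsCompact (G '' {x : BrownProof.Xlim f | ∀ n, x.1 n ∈ A n}) :=
        hAlim.image hGcont
      have hsurjA : ∀ k, Function.Surjective
          (fun a : A (k + 1) => (⟨f k a.1, hfA k a.2⟩ : A k)) := by
        rintro k ⟨y, hy⟩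
        obtain ⟨w, hw, hfw⟩ := BrownProof.fAsurj hf hA hnear k hy
        exact ⟨⟨w, hw⟩, Subtype.ext hfw⟩
      have hclos : z ∈ closure (G '' {x : BrownProof.Xlim f | ∀ n, x.1 n ∈ A n}) := by
        rw [Metric.mem_closure_iff]
        intro ε hε
        obtain ⟨n, hn⟩ : ∃ n, (σ n).δ < ε := (hδ0.eventually_lt_const hε).exists
        have hzn : z ∈ ⇑(σ n).g '' A n := by rw [(σ n).himg]; exact hz
        obtain ⟨a, ha, hga⟩ := hzn
        obtain ⟨x', hx'c, hx'n⟩ := BrownProof.proj_surj n (fun k => A k)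
          (fun k a => (⟨f k a.1, hfA k a.2⟩ : A k)) hsurjA ⟨a, ha⟩
        have hcmp : ∀ k, f k ((fun k => (x' k).1) (k + 1)) = (fun k => (x' k).1) k :=
          fun k => congrArg Subtype.val (hx'c k)
        set x : BrownProof.Xlim f := ⟨fun k => (x' k).1, hcmp⟩ with hx
        have hxA : x ∈ {x : BrownProof.Xlim f | ∀ n, x.1 n ∈ A n} := fun k => (x' k).2
        refine ⟨G x, Set.mem_image_of_mem _ hxA, ?_⟩
        have h2 : Gn n x = z := by
          show (σ n).g (x.1 n) = z
          have : x.1 n = a := congrArg Subtype.val hx'n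
          rw [this, hga]
        calc dist z (G x) = dist (Gn n x) (G x) := by rw [h2]
          _ ≤ (σ n).δ := hGdist _ n
          _ < ε := hn
      rwa [hcomp.isClosed.closure_eq] at hclos
  obtain ⟨h0, hh0⟩ := hXS 0
  have hGbij : Function.Bijective G := ⟨hGinj, hGsurj⟩
  have hEcont : Continuous (Equiv.ofBijective G hGbij) := hGcont
  refine ⟨(hEcont.homeoOfEquivCompactToT2).trans h0, ?_⟩
  have hcoe : ⇑((hEcont.homeoOfEquivCompactToT2).trans h0) = ⇑h0 ∘ G := rfl
  rw [hcoe, Set.image_comp, hGA0, hh0]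
end

section
/- Let X_i (i ∈ ℕ) be compact metric spaces equipped with two sequences of bonding maps f_{i+1}, g_{i+1} : X_{i+1} → X_i, and let A_i ⊆ X_i be compact subsets with f_{i+1}(A_{i+1}) ⊆ A_i and g_{i+1}(A_{i+1}) ⊆ A_i for all i. Let X = lim(X_i, f_i), Y = lim(X_i, g_i), A = { x ∈ X : x_i ∈ A_i for all i } and B = { y ∈ Y : y_i ∈ A_i for all i }. Suppose (a_i) is a Lebesgue sequence for (X_i, g_i) and that sup_{x ∈ X_{i+1}} dist(f_{i+1}(x), g_{i+1}(x)) < a_i for every i. Then for every N and x ∈ X the limit F_N(x) := lim_{n→∞} g^n_N(f^∞_n(x)) exists, the resulting map F : X → Y, F(x) = (F_0(x), F_1(x), …), is well defined and continuous, F(A) ⊆ B, and the restriction F|_A : A → B is surjective. -/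
open Filter Topology

section BrownAux

variable {X : ℕ → Type}

/-- Cast between fibers of equal index. -/
def bCast {X : ℕ → Type} {m n : ℕ} (h : m = n) (x : X m) : X n := h ▸ x

theorem bCast_app {m n : ℕ} (h : m = n) (x : ∀ k, X k) : bCast (X := X) h (x m) = x n := by
  subst h; rfl

theorem bCast_mem {A : ∀ n, Set (X n)} {m n : ℕ} (h : m = n) {x : X m} (hx : x ∈ A m) :
    bCast (X := X) h x ∈ A n := by subst h; exact hx

theorem bCast_f (f : ∀ n, X (n + 1) → X n) {m n : ℕ} (p : m = n) (q : m + 1 = n + 1)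
    (x : X (m + 1)) : f n (bCast (X := X) q x) = bCast p (f m x) := by subst p; rfl

theorem bond_congr (f : ∀ n, X (n + 1) → X n) (i : ℕ) {k k' : ℕ} (h : k = k') (x : X (i + k)) :
    bond f i k x = bond f i k' (bCast (by rw [h]) x) := by subst h; rfl

theorem bond_peel (f : ∀ n, X (n + 1) → X n) (i : ℕ) :
    ∀ (r : ℕ) (x : X (i + (r + 1))),
      bond f i (r + 1) x = f i (bond f (i + 1) r (bCast (by omega) x))
  | 0, x => rfl
  | r + 1, x => by
    show bond f i (r + 1) (f (i + (r + 1)) x) = _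
    rw [bond_peel f i r (f (i + (r + 1)) x)]
    exact congrArg (fun w => f i (bond f (i + 1) r w))
      ((bCast_f f (show i + (r + 1) = (i + 1) + r by omega)
        (show i + (r + 1) + 1 = (i + 1) + r + 1 by omega) x).symm)

theorem bond_mapsTo {A : ∀ n, Set (X n)} (f : ∀ n, X (n + 1) → X n)
    (hfA : ∀ n, Set.MapsTo (f n) (A (n + 1)) (A n)) (i : ℕ) :
    ∀ k, Set.MapsTo (bond f i k) (A (i + k)) (A i)
  | 0 => fun _ hx => hx
  | k + 1 => fun _ hx => bond_mapsTo f hfA i k (hfA (i + k) hx)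

theorem bond_continuous [∀ n, TopologicalSpace (X n)] (f : ∀ n, X (n + 1) → X n)
    (hf : ∀ n, Continuous (f n)) (i : ℕ) : ∀ k, Continuous (bond f i k)
  | 0 => continuous_id
  | k + 1 => (bond_continuous f hf i k).comp (hf (i + k))

theorem bond_proj (g : ∀ n, X (n + 1) → X n) (y : ∀ n, X n)
    (hy : ∀ n, g n (y (n + 1)) = y n) (N : ℕ) : ∀ k, bond g N k (y (N + k)) = y N
  | 0 => rfl
  | k + 1 => by
    show bond g N k (g (N + k) (y (N + k + 1))) = y N
    rw [hy (N + k)]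
    exact bond_proj g y hy N k

theorem brown_telescope {X : ℕ → Type} [∀ n, MetricSpace (X n)]
    (f g : ∀ n, X (n + 1) → X n) (a b : ℕ → ℝ)
    (hLeb : ∀ i k, ∀ x y : X (i + (k + 1)), dist x y < a (i + (k + 1)) →
      dist (bond g i (k + 1) x) (bond g i (k + 1) y) < b (i + (k + 1)))
    (hclose : ∀ i, ∀ x : X (i + 1), dist (f i x) (g i x) < a i)
    (y : ∀ n, X n) (hy : ∀ n, g n (y (n + 1)) = y n) (N : ℕ) :
    ∀ (r k : ℕ),
      dist (bond g N (k + 1) (bond f (N + (k + 1)) r (y ((N + (k + 1)) + r)))) (y N)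
        ≤ ∑ t ∈ Finset.range r, b ((N + (k + 1)) + t) := by
  intro r
  induction r with
  | zero =>
    intro k
    have h0 : bond f (N + (k + 1)) 0 (y ((N + (k + 1)) + 0)) = y (N + (k + 1)) := rfl
    rw [h0, bond_proj g y hy N (k + 1)]
    simp
  | succ r ih =>
    intro k
    rw [bond_peel f (N + (k + 1)) r, bCast_app _ y]
    set w := bond f ((N + (k + 1)) + 1) r (y (((N + (k + 1)) + 1) + r)) with hw
    have h1 : dist (bond g N (k + 1) (f (N + (k + 1)) w)) (bond g N (k + 1) (g (N + (k + 1)) w))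
        < b (N + (k + 1)) := hLeb N k _ _ (hclose (N + (k + 1)) w)
    have h2 : dist (bond g N (k + 1) (g (N + (k + 1)) w)) (y N)
        ≤ ∑ t ∈ Finset.range r, b ((N + (k + 1 + 1)) + t) := ih (k + 1)
    calc dist (bond g N (k + 1) (f (N + (k + 1)) w)) (y N)
        ≤ dist (bond g N (k + 1) (f (N + (k + 1)) w)) (bond g N (k + 1) (g (N + (k + 1)) w))
          + dist (bond g N (k + 1) (g (N + (k + 1)) w)) (y N) := dist_triangle _ _ _
      _ ≤ b (N + (k + 1)) + ∑ t ∈ Finset.range r, b ((N + (k + 1 + 1)) + t) :=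
          add_le_add h1.le h2
      _ = ∑ t ∈ Finset.range (r + 1), b ((N + (k + 1)) + t) := by
          have e1 : ∑ t ∈ Finset.range r, b ((N + (k + 1 + 1)) + t)
              = ∑ t ∈ Finset.range r, b ((N + (k + 1)) + (t + 1)) :=
            Finset.sum_congr rfl fun t _ => congrArg b (by omega)
          have e2 : b (N + (k + 1)) = b ((N + (k + 1)) + 0) := congrArg b (by omega)
          rw [e1, e2, Finset.sum_range_succ' (fun t => b ((N + (k + 1)) + t)) r]
          exact add_comm _ _

end BrownAux

/-- Brown's proposition for pairs: given two inverse sequences on the same compact metric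
spaces `X_i` with compact subsets `A_i` preserved by both families of bonding maps, where
`(a_i)` is a Lebesgue sequence for `(X_i, g_i)` and `dist (f_{i+1} x) (g_{i+1} x) < a_i`
for all `x`, the maps `F_N(x) = lim_n g^n_N (f^∞_n x)` exist, assemble into a well-defined
continuous map `F : lim (X_i, f_i) → lim (X_i, g_i)` with `F(A) ⊆ B`, and the restriction
`F|_A : A → B` is surjective. -/
theorem brown_comparison_surjection_pairs
    (X : ℕ → Type) [∀ n, MetricSpace (X n)] [∀ n, CompactSpace (X n)]
    (A : ∀ n, Set (X n)) (hA : ∀ n, IsCompact (A n))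
    (f g : ∀ n, X (n + 1) → X n)
    (hf : ∀ n, Continuous (f n)) (hg : ∀ n, Continuous (g n))
    (hfA : ∀ n, Set.MapsTo (f n) (A (n + 1)) (A n))
    (hgA : ∀ n, Set.MapsTo (g n) (A (n + 1)) (A n))
    (a : ℕ → ℝ) (ha : ∀ i, 0 < a i)
    (hLeb : ∃ b : ℕ → ℝ, (∀ i, 0 < b i) ∧ Summable b ∧
      ∀ i k, ∀ x y : X (i + (k + 1)), dist x y < a (i + (k + 1)) →
        dist (bond g i (k + 1) x) (bond g i (k + 1) y) < b (i + (k + 1)))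
    (hclose : ∀ i, ∀ x : X (i + 1), dist (f i x) (g i x) < a i) :
    ∃ F : ∀ N, {x : ∀ n, X n // ∀ n, f n (x (n + 1)) = x n} → X N,
      (∀ N x, Tendsto (fun k => bond g N k (x.1 (N + k))) atTop (𝓝 (F N x))) ∧
      ∃ Fhat : {x : ∀ n, X n // ∀ n, f n (x (n + 1)) = x n} →
          {y : ∀ n, X n // ∀ n, g n (y (n + 1)) = y n},
        (∀ x N, (Fhat x).1 N = F N x) ∧ Continuous Fhat ∧
        Set.MapsTo Fhat {x | ∀ n, x.1 n ∈ A n} {y | ∀ n, y.1 n ∈ A n} ∧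
        Set.SurjOn Fhat {x | ∀ n, x.1 n ∈ A n} {y | ∀ n, y.1 n ∈ A n} := by
  classical
  obtain ⟨b, hbpos, hbsum, hLeb⟩ := hLeb
  set Lf := {x : ∀ n, X n // ∀ n, f n (x (n + 1)) = x n} with hLf
  -- the approximating sequences
  set s : Lf → ∀ N, ℕ → X N := fun x N k => bond g N k (x.1 (N + k)) with hs
  -- the distance control sequence
  set d : ℕ → ℕ → ℝ := fun N j => if j = 0 then a N else b (N + j) with hd
  have hdist : ∀ (x : Lf) N k, dist (s x N k) (s x N (k + 1)) ≤ d N k := by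
    intro x N k
    have hx : x.1 (N + k) = f (N + k) (x.1 (N + k + 1)) := (x.2 (N + k)).symm
    have hk1 : s x N (k + 1) = bond g N k (g (N + k) (x.1 (N + k + 1))) := rfl
    have hk0 : s x N k = bond g N k (f (N + k) (x.1 (N + k + 1))) := by
      show bond g N k (x.1 (N + k)) = _; rw [hx]
    rw [hk0, hk1]
    cases k with
    | zero =>
      show dist (f N (x.1 (N + 1))) (g N (x.1 (N + 1))) ≤ d N 0
      simpa [d] using (hclose N (x.1 (N + 1))).le
    | succ k' =>
      have := (hLeb N k' (f (N + (k' + 1)) (x.1 (N + (k' + 1) + 1)))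
        (g (N + (k' + 1)) (x.1 (N + (k' + 1) + 1)))
        (hclose (N + (k' + 1)) (x.1 (N + (k' + 1) + 1)))).le
      simpa [d] using this
  have hdsum : ∀ N, Summable (d N) := by
    intro N
    rw [← summable_nat_add_iff 1]
    refine ((summable_nat_add_iff (N + 1)).2 hbsum).congr fun n => ?_
    show b (n + (N + 1)) = d N (n + 1)
    simp only [d, Nat.succ_ne_zero, if_false]
    exact congrArg b (by omega)
  have hdnonneg : ∀ N j, 0 ≤ d N j := by
    intro N j
    by_cases h : j = 0 <;> simp [d, h, (ha N).le, (hbpos (N + j)).le]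
  have hex : ∀ (x : Lf) N, ∃ L, Tendsto (fun k => s x N k) atTop (𝓝 L) := fun x N =>
    cauchySeq_tendsto_of_complete
      (cauchySeq_of_dist_le_of_summable (d N) (hdist x N) (hdsum N))
  set F : ∀ N, Lf → X N := fun N x => (hex x N).choose with hF
  have hFt : ∀ N (x : Lf), Tendsto (fun k => s x N k) atTop (𝓝 (F N x)) := fun N x =>
    (hex x N).choose_spec
  have hbound : ∀ (x : Lf) N k, dist (s x N k) (F N x) ≤ ∑' m, d N (k + m) := fun x N k =>
    dist_le_tsum_of_dist_le_of_tendsto (d N) (hdist x N) (hdsum N) (hFt N x) k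
  -- compatibility of F with g
  have hcompat : ∀ (x : Lf) N, g N (F (N + 1) x) = F N x := by
    intro x N
    have h1 : Tendsto (fun k => s x N (k + 1)) atTop (𝓝 (F N x)) :=
      (hFt N x).comp (tendsto_add_atTop_nat 1)
    have h2 : ∀ k, s x N (k + 1) = g N (s x (N + 1) k) := by
      intro k
      show bond g N (k + 1) (x.1 (N + (k + 1))) = _
      rw [bond_peel g N k, bCast_app _ x.1]
    have h3 : Tendsto (fun k => g N (s x (N + 1) k)) atTop (𝓝 (g N (F (N + 1) x))) :=
      ((hg N).tendsto _).comp (hFt (N + 1) x)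
    exact tendsto_nhds_unique h3 (h1.congr h2)
  refine ⟨F, hFt, fun x => ⟨fun N => F N x, fun N => hcompat x N⟩, fun x N => rfl, ?_, ?_, ?_⟩
  · -- continuity
    apply Continuous.subtype_mk
    apply continuous_pi
    intro N
    have htail : Tendsto (fun k => ∑' m, d N (k + m)) atTop (𝓝 0) := by
      refine (tendsto_sum_nat_add (d N)).congr fun i => ?_
      exact tsum_congr fun m => by rw [add_comm]
    have hTU : TendstoUniformly (fun k (x : Lf) => s x N k) (fun x => F N x) atTop := by
      rw [Metric.tendstoUniformly_iff]
      intro ε hε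
      filter_upwards [htail.eventually (gt_mem_nhds hε)] with k hk x
      calc dist (F N x) (s x N k) = dist (s x N k) (F N x) := dist_comm _ _
        _ ≤ ∑' m, d N (k + m) := hbound x N k
        _ < ε := hk
    refine hTU.continuous (Frequently.of_forall fun k => ?_)
    exact (bond_continuous g hg N k).comp
      ((continuous_apply (N + k)).comp continuous_subtype_val)
  · -- MapsTo
    intro x hx N
    refine (hA N).isClosed.mem_of_tendsto (hFt N x) (Eventually.of_forall fun k => ?_)
    exact bond_mapsTo g hgA N k (hx (N + k))
  · -- SurjOn
    intro y hy
    set T : ℕ → ℝ := fun j => ∑' i, b (i + j) with hT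
    have hbs : ∀ j, Summable fun i => b (i + j) := fun j => (summable_nat_add_iff j).2 hbsum
    have hTt : Tendsto T atTop (𝓝 0) := tendsto_sum_nat_add b
    set W : ℕ → Set (∀ n, X n) := fun m =>
      {z | ∀ n, z n ∈ A n} ∩
        ({z | ∀ n, n + 1 ≤ m → f n (z (n + 1)) = z n} ∩
          {z | ∀ N k, N + (k + 1) ≤ m →
            dist (bond g N (k + 1) (z (N + (k + 1)))) (y.1 N) ≤ T (N + (k + 1))}) with hW
    have hW1 : IsClosed {z : ∀ n, X n | ∀ n, z n ∈ A n} := by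
      rw [Set.setOf_forall]
      exact isClosed_iInter fun n => (hA n).isClosed.preimage (continuous_apply n)
    have hWclosed : ∀ m, IsClosed (W m) := by
      intro m
      refine hW1.inter (IsClosed.inter ?_ ?_)
      · rw [Set.setOf_forall]
        refine isClosed_iInter fun n => ?_
        by_cases h : n + 1 ≤ m
        · simp only [h, true_implies]
          exact isClosed_eq ((hf n).comp (continuous_apply (n + 1))) (continuous_apply n)
        · simp only [h, false_implies, Set.setOf_true]
          exact isClosed_univ
      · rw [Set.setOf_forall]
        refine isClosed_iInter fun N => ?_
        rw [Set.setOf_forall]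
        refine isClosed_iInter fun k => ?_
        by_cases h : N + (k + 1) ≤ m
        · simp only [h, true_implies]
          exact isClosed_le
            (((bond_continuous g hg N (k + 1)).comp
              (continuous_apply (N + (k + 1)))).dist continuous_const)
            continuous_const
        · simp only [h, false_implies, Set.setOf_true]
          exact isClosed_univ
    have hWanti : ∀ m, W (m + 1) ⊆ W m := by
      rintro m z ⟨h1, h2, h3⟩
      exact ⟨h1, fun n hn => h2 n (hn.trans (Nat.le_succ m)),
        fun N k hk => h3 N k (hk.trans (Nat.le_succ m))⟩
    have hWne : ∀ m, (W m).Nonempty := by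
      intro m
      refine ⟨fun n => if h : n ≤ m then
        bond f n (m - n) (bCast (by omega) (y.1 m)) else y.1 n, ?_, ?_, ?_⟩
      · intro n
        dsimp only
        split_ifs with h
        · exact bond_mapsTo f hfA n (m - n) (bCast_mem (by omega) (hy m))
        · exact hy n
      · intro n hn
        dsimp only
        rw [dif_pos hn, dif_pos (Nat.le_of_succ_le hn)]
        have hr : m - n = (m - (n + 1)) + 1 := by omega
        rw [bond_congr f n hr, bond_peel f n (m - (n + 1))]
        refine congrArg (fun w => f n (bond f (n + 1) (m - (n + 1)) w)) ?_
        simp only [bCast_app]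
      · intro N k hk
        dsimp only
        rw [dif_pos hk]
        set r := m - (N + (k + 1)) with hr
        rw [bCast_app _ y.1]
        have htel := brown_telescope f g a b hLeb hclose y.1 y.2 N r k
        calc dist (bond g N (k + 1) (bond f (N + (k + 1)) r (y.1 ((N + (k + 1)) + r)))) (y.1 N)
            ≤ ∑ t ∈ Finset.range r, b ((N + (k + 1)) + t) := htel
          _ = ∑ t ∈ Finset.range r, b (t + (N + (k + 1))) :=
              Finset.sum_congr rfl fun t _ => congrArg b (by omega)
          _ ≤ T (N + (k + 1)) :=
              (hbs _).sum_le_tsum (Finset.range r) (fun i _ => (hbpos _).le)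
    have hW0 : IsCompact (W 0) := by
      refine (isCompact_univ_pi fun n => hA n).of_isClosed_subset (hWclosed 0) ?_
      intro z hz
      rw [Set.mem_univ_pi]
      exact fun n => hz.1 n
    obtain ⟨z, hz⟩ := IsCompact.nonempty_iInter_of_sequence_nonempty_isCompact_isClosed
      W hWanti hWne hW0 hWclosed
    have hzW : ∀ m, z ∈ W m := by
      intro m
      exact Set.mem_iInter.1 hz m
    have hzA : ∀ n, z n ∈ A n := (hzW 0).1
    have hzf : ∀ n, f n (z (n + 1)) = z n := fun n => (hzW (n + 1)).2.1 n le_rfl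
    have hzd : ∀ N k, dist (bond g N (k + 1) (z (N + (k + 1)))) (y.1 N) ≤ T (N + (k + 1)) :=
      fun N k => (hzW (N + (k + 1))).2.2 N k le_rfl
    set xx : Lf := ⟨z, hzf⟩ with hxx
    refine ⟨xx, hzA, ?_⟩
    apply Subtype.ext
    funext N
    show F N xx = y.1 N
    have h1 : Tendsto (fun k => s xx N (k + 1)) atTop (𝓝 (F N xx)) :=
      (hFt N xx).comp (tendsto_add_atTop_nat 1)
    have hTc : Tendsto (fun k => T (N + (k + 1))) atTop (𝓝 0) := by
      refine (hTt.comp (tendsto_add_atTop_nat (N + 1))).congr fun k => ?_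
      show T (k + (N + 1)) = T (N + (k + 1))
      exact congrArg T (by omega)
    have h2 : Tendsto (fun k => s xx N (k + 1)) atTop (𝓝 (y.1 N)) := by
      rw [tendsto_iff_dist_tendsto_zero]
      exact squeeze_zero (fun k => dist_nonneg) (fun k => hzd N k) hTc
    exact tendsto_nhds_unique h1 h2
end

section
/- Let (X_i, f_i) be an inverse sequence of compact metric spaces with inverse limit X = lim(X_i, f_i). For each i, let K_i be a nonempty collection of continuous maps X_{i+1} → X_i, and suppose that for every i and every ε > 0 there exists g ∈ K_i with sup_{x ∈ X_{i+1}} dist(f_{i+1}(x), g(x)) < ε. Then there is a sequence (g_i) with g_i ∈ K_i for every i such that X is homeomorphic to the inverse limit lim(X_i, g_i). -/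
open Filter Topology

set_option linter.unusedSectionVars false
set_option linter.unusedVariables false
set_option maxHeartbeats 1000000

namespace BrownApprox

variable {X : ℕ → Type} [∀ n, MetricSpace (X n)]

/-- `iter f n m : X (n+m) → X n` is the composite `f n ∘ f (n+1) ∘ ⋯ ∘ f (n+m-1)`. -/
def iter (f : ∀ n, X (n + 1) → X n) (n : ℕ) : ∀ m, X (n + m) → X n
  | 0 => id
  | m + 1 => fun z => iter f n m (f (n + m) z)

lemma iter_cont (f : ∀ n, X (n + 1) → X n) (hf : ∀ n, Continuous (f n)) (n : ℕ) :
    ∀ m, Continuous (iter f n m)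
  | 0 => continuous_id
  | m + 1 => (iter_cont f hf n m).comp (hf (n + m))

lemma iter_congr (f₁ f₂ : ∀ n, X (n + 1) → X n) (n : ℕ) :
    ∀ m, (∀ k, k < n + m → f₁ k = f₂ k) → ∀ z, iter f₁ n m z = iter f₂ n m z
  | 0, _, _ => rfl
  | m + 1, h, z => by
      show iter f₁ n m (f₁ (n + m) z) = iter f₂ n m (f₂ (n + m) z)
      rw [h (n + m) (by omega)]
      exact iter_congr f₁ f₂ n m (fun k hk => h k (by omega)) _

lemma iter_thread (f : ∀ n, X (n + 1) → X n) (x : ∀ i, X i)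
    (hx : ∀ n, f n (x (n + 1)) = x n) (n : ℕ) :
    ∀ m, iter f n m (x (n + m)) = x n
  | 0 => rfl
  | m + 1 => by
      show iter f n m (f (n + m) (x (n + m + 1))) = x n
      rw [hx (n + m)]
      exact iter_thread f x hx n m

lemma cast_apply (x : ∀ i, X i) {a b : ℕ} (h : a = b) :
    x b = cast (congrArg X h) (x a) := by subst h; rfl

lemma cast_f (f : ∀ n, X (n + 1) → X n) {a b : ℕ} (h : a = b) (y : X (a + 1)) :
    f b (cast (congrArg X (congrArg Nat.succ h)) y) = cast (congrArg X h) (f a y) := by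
  subst h; rfl

lemma iter_left (f : ∀ n, X (n + 1) → X n) :
    ∀ (m n : ℕ) (y : X (n + m + 1)),
      f n (iter f (n + 1) m (cast (congrArg X (Nat.succ_add n m).symm) y)) =
        iter f n (m + 1) y
  | 0, n, y => congrArg (f n) (cast_eq (congrArg X (Nat.succ_add n 0).symm) y)
  | m + 1, n, y => by
      have h : n + (m + 1) = n + 1 + m := (Nat.succ_add n m).symm
      have hc : f (n + 1 + m) (cast (congrArg X (Nat.succ_add n (m + 1)).symm) y)
          = cast (congrArg X h) (f (n + (m + 1)) y) := cast_f f h y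
      show f n (iter f (n + 1) m
          (f (n + 1 + m) (cast (congrArg X (Nat.succ_add n (m + 1)).symm) y)))
        = iter f n (m + 1) (f (n + (m + 1)) y)
      rw [hc]
      exact iter_left f m n (f (n + (m + 1)) y)

lemma iter_left_apply (f : ∀ n, X (n + 1) → X n) (x : ∀ i, X i) (n m : ℕ) :
    f n (iter f (n + 1) m (x (n + 1 + m))) = iter f n (m + 1) (x (n + m + 1)) := by
  rw [cast_apply x (Nat.succ_add n m).symm]
  exact iter_left f m n (x (n + m + 1))

variable [∀ n, CompactSpace (X n)]

lemma iter_modulus (f : ∀ n, X (n + 1) → X n) (hf : ∀ n, Continuous (f n))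
    (n m : ℕ) {ε : ℝ} (hε : 0 < ε) :
    ∃ δ > 0, ∀ z w : X (n + m), dist z w ≤ δ → dist (iter f n m z) (iter f n m w) ≤ ε := by
  obtain ⟨δ, hδ, H⟩ := Metric.uniformContinuous_iff.mp
    (CompactSpace.uniformContinuous_of_continuous (iter_cont f hf n m)) ε hε
  exact ⟨δ / 2, by linarith, fun z w h => le_of_lt (H (lt_of_le_of_lt h (by linarith)))⟩

lemma modulus_finset (f : ∀ n, X (n + 1) → X n) (hf : ∀ n, Continuous (f n))
    (s : Finset (ℕ × ℕ)) {ε : ℝ} (hε : 0 < ε) :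
    ∃ δ > 0, ∀ p ∈ s, ∀ z w : X (p.1 + p.2), dist z w ≤ δ →
      dist (iter f p.1 p.2 z) (iter f p.1 p.2 w) ≤ ε := by
  classical
  induction s using Finset.induction_on with
  | empty => exact ⟨1, one_pos, by simp⟩
  | insert _ _ hnotmem ih =>
      rename_i p s
      obtain ⟨δ₁, hδ₁, H₁⟩ := ih
      obtain ⟨δ₂, hδ₂, H₂⟩ := iter_modulus f hf p.1 p.2 hε
      refine ⟨min δ₁ δ₂, lt_min hδ₁ hδ₂, fun q hq z w hzw => ?_⟩
      rcases Finset.mem_insert.mp hq with h | h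
      · subst h; exact H₂ z w (le_trans hzw (min_le_right _ _))
      · exact H₁ q h z w (le_trans hzw (min_le_left _ _))

lemma modulus_level (f : ∀ n, X (n + 1) → X n) (hf : ∀ n, Continuous (f n))
    (m : ℕ) {ε : ℝ} (hε : 0 < ε) :
    ∃ δ > 0, ∀ n k, n + k = m → ∀ z w : X (n + k), dist z w ≤ δ →
      dist (iter f n k z) (iter f n k w) ≤ ε := by
  classical
  obtain ⟨δ, hδ, H⟩ := modulus_finset f hf
    ((Finset.range (m + 1)).image fun k => (m - k, k)) hε
  refine ⟨δ, hδ, fun n k hk z w hzw => ?_⟩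
  have hmem : (n, k) ∈ (Finset.range (m + 1)).image fun k => (m - k, k) := by
    refine Finset.mem_image.mpr ⟨k, Finset.mem_range.mpr (by omega), ?_⟩
    have : m - k = n := by omega
    rw [this]
  exact H (n, k) hmem z w hzw

lemma exists_pos_forall_le (q : ℕ → ℝ) (hq : ∀ k, 0 < q k) :
    ∀ N, ∃ c > 0, ∀ k, k < N → c ≤ q k
  | 0 => ⟨1, one_pos, fun k hk => absurd hk (Nat.not_lt_zero k)⟩
  | N + 1 => by
      obtain ⟨c, hc, H⟩ := exists_pos_forall_le q hq N
      refine ⟨min c (q N), lt_min hc (hq N), fun k hk => ?_⟩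
      rcases Nat.lt_succ_iff_lt_or_eq.mp hk with h | h
      · exact le_trans (min_le_left _ _) (H k h)
      · subst h; exact min_le_right _ _

/-- Extend a partial choice of bonding maps (below `m`) by `f` above. -/
def fill (f : ∀ n, X (n + 1) → X n) (m : ℕ)
    (prev : ∀ k, k < m → (X (k + 1) → X k) × ℝ) : ∀ k, X (k + 1) → X k :=
  fun k => if h : k < m then (prev k h).1 else f k

/-- The conditions that the stage-`m` choice `(g m, δ m)` must satisfy. -/
def Good (f : ∀ n, X (n + 1) → X n) (K : ∀ i, Set (X (i + 1) → X i)) (m : ℕ)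
    (prev : ∀ k, k < m → (X (k + 1) → X k) × ℝ)
    (p : (X (m + 1) → X m) × ℝ) : Prop :=
  p.1 ∈ K m ∧ 0 < p.2 ∧ p.2 ≤ (1 / 2 : ℝ) ^ m ∧
  (∀ k (h : k < m), p.2 ≤ (prev k h).2 / 2) ∧
  (∀ n k, n + k = m → ∀ z w : X (n + k), dist z w ≤ p.2 →
      dist (iter f n k z) (iter f n k w) ≤ (1 / 2 : ℝ) ^ m ∧
      dist (iter (fill f m prev) n k z) (iter (fill f m prev) n k w) ≤ (1 / 2 : ℝ) ^ m) ∧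
  (∃ η > 0, (∀ x : X (m + 1), dist (f m x) (p.1 x) ≤ η) ∧
    ∀ n k, n + k = m → ∀ z w : X (n + k), dist z w ≤ η →
      dist (iter f n k z) (iter f n k w) ≤ p.2 / 2 ∧
      dist (iter (fill f m prev) n k z) (iter (fill f m prev) n k w) ≤ p.2 / 2)

lemma exists_good (f : ∀ n, X (n + 1) → X n) (K : ∀ i, Set (X (i + 1) → X i))
    (hf : ∀ n, Continuous (f n)) (hKcont : ∀ i, ∀ g ∈ K i, Continuous g)
    (happrox : ∀ i, ∀ ε > (0 : ℝ), ∃ g ∈ K i, ∀ x, dist (f i x) (g x) < ε) (m : ℕ)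
    (prev : ∀ k, k < m → {p : (X (k + 1) → X k) × ℝ // 0 < p.2 ∧ p.1 ∈ K k}) :
    ∃ p : {p : (X (m + 1) → X m) × ℝ // 0 < p.2 ∧ p.1 ∈ K m},
      Good f K m (fun k h => (prev k h).1) p.1 := by
  set prev' : ∀ k, k < m → (X (k + 1) → X k) × ℝ := fun k h => (prev k h).1 with hprev'
  have hfillc : ∀ k, Continuous (fill f m prev' k) := by
    intro k
    unfold fill
    split
    · exact hKcont _ _ (prev k ‹_›).2.2
    · exact hf k
  have hhalfpos : (0 : ℝ) < (1 / 2 : ℝ) ^ m := by positivity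
  obtain ⟨δ₁, hδ₁, H₁⟩ := modulus_level f hf m hhalfpos
  obtain ⟨δ₂, hδ₂, H₂⟩ := modulus_level (fill f m prev') hfillc m hhalfpos
  obtain ⟨c, hc, Hc⟩ := exists_pos_forall_le
    (fun k => if h : k < m then (prev k h).1.2 / 2 else 1)
    (by intro k; split
        · have := (prev k ‹_›).2.1; linarith
        · exact one_pos) m
  set δ : ℝ := min (min δ₁ δ₂) (min ((1 / 2 : ℝ) ^ m) c) with hδdef
  have hδ : 0 < δ := lt_min (lt_min hδ₁ hδ₂) (lt_min hhalfpos hc)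
  have hδhalf : 0 < δ / 2 := by linarith
  obtain ⟨η₁, hη₁, G₁⟩ := modulus_level f hf m hδhalf
  obtain ⟨η₂, hη₂, G₂⟩ := modulus_level (fill f m prev') hfillc m hδhalf
  set η : ℝ := min η₁ η₂ with hηdef
  have hη : 0 < η := lt_min hη₁ hη₂
  obtain ⟨g, hgK, hg⟩ := happrox m η hη
  refine ⟨⟨(g, δ), hδ, hgK⟩, hgK, hδ, ?_, ?_, ?_, η, hη, fun x => (hg x).le,
    fun n k hk z w hzw => ⟨G₁ n k hk z w (le_trans hzw (min_le_left _ _)),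
      G₂ n k hk z w (le_trans hzw (min_le_right _ _))⟩⟩
  · exact le_trans (min_le_right _ _) (min_le_left _ _)
  · intro k h
    have hck := Hc k h
    rw [dif_pos h] at hck
    exact le_trans (le_trans (min_le_right _ _) (min_le_right _ _)) hck
  · intro n k hk z w hzw
    exact ⟨H₁ n k hk z w (le_trans hzw (le_trans (min_le_left _ _) (min_le_left _ _))),
      H₂ n k hk z w (le_trans hzw (le_trans (min_le_left _ _) (min_le_right _ _)))⟩

noncomputable def pick (f : ∀ n, X (n + 1) → X n) (K : ∀ i, Set (X (i + 1) → X i))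
    (hf : ∀ n, Continuous (f n)) (hKcont : ∀ i, ∀ g ∈ K i, Continuous g)
    (happrox : ∀ i, ∀ ε > (0 : ℝ), ∃ g ∈ K i, ∀ x, dist (f i x) (g x) < ε)
    (m : ℕ) : {p : (X (m + 1) → X m) × ℝ // 0 < p.2 ∧ p.1 ∈ K m} :=
  Classical.choose
    (exists_good f K hf hKcont happrox m (fun k (hk : k < m) => pick f K hf hKcont happrox k))
termination_by m
decreasing_by all_goals assumption

lemma pick_spec (f : ∀ n, X (n + 1) → X n) (K : ∀ i, Set (X (i + 1) → X i))
    (hf : ∀ n, Continuous (f n)) (hKcont : ∀ i, ∀ g ∈ K i, Continuous g)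
    (happrox : ∀ i, ∀ ε > (0 : ℝ), ∃ g ∈ K i, ∀ x, dist (f i x) (g x) < ε) (m : ℕ) :
    Good f K m (fun k _ => (pick f K hf hKcont happrox k).1)
      (pick f K hf hKcont happrox m).1 := by
  have h := Classical.choose_spec
    (exists_good f K hf hKcont happrox m (fun k _ => pick f K hf hKcont happrox k))
  rw [pick]
  exact h

/-- The key limit construction: given bonding maps `u` approximating the bonding maps `v`
(in the sense of `Hstep`), every `v`-thread gives rise, in the limit, to a `u`-thread. -/
lemma limit_construction (u v : ∀ n, X (n + 1) → X n) (hu : ∀ n, Continuous (u n))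
    (δ : ℕ → ℝ) (hδ0 : ∀ j, 0 < δ j) (hδ2 : ∀ j, δ j ≤ (1 / 2 : ℝ) ^ j)
    (hhalf : ∀ j, δ (j + 1) ≤ δ j / 2)
    (Hstep : ∀ n m (z : X (n + m + 1)),
      dist (iter u n m (v (n + m) z)) (iter u n m (u (n + m) z)) ≤ δ (n + m) / 2) :
    ∃ L : {x : ∀ i, X i // ∀ n, v n (x (n + 1)) = x n} → ∀ n, X n,
      (∀ x n, Tendsto (fun m => iter u n m (x.1 (n + m))) atTop (𝓝 (L x n))) ∧
      (∀ x n m, dist (iter u n m (x.1 (n + m))) (L x n) ≤ δ (n + m)) ∧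
      (∀ x n, u n (L x (n + 1)) = L x n) ∧
      (∀ n, Continuous fun x => L x n) := by
  have hδmono : ∀ a b : ℕ, a ≤ b → δ b ≤ δ a := by
    have hdec : ∀ j, δ (j + 1) ≤ δ j := fun j => le_trans (hhalf j) (by have := hδ0 j; linarith)
    exact fun a b hab => antitone_nat_of_succ_le hdec hab
  set a : {x : ∀ i, X i // ∀ n, v n (x (n + 1)) = x n} → ∀ n : ℕ, ℕ → X n :=
    fun x n m => iter u n m (x.1 (n + m)) with ha
  have hstep : ∀ x n m, dist (a x n m) (a x n (m + 1)) ≤ δ (n + m) / 2 := by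
    intro x n m
    have h1 : a x n (m + 1) = iter u n m (u (n + m) (x.1 (n + m + 1))) := rfl
    have h2 : a x n m = iter u n m (v (n + m) (x.1 (n + m + 1))) := by
      show iter u n m (x.1 (n + m)) = _
      rw [x.2 (n + m)]
    rw [h1, h2]
    exact Hstep n m (x.1 (n + m + 1))
  have htail : ∀ x n m m', m ≤ m' → dist (a x n m) (a x n m') ≤ δ (n + m) - δ (n + m') := by
    intro x n m m' hmm'
    induction m', hmm' using Nat.le_induction with
    | base => simp
    | succ m' hm' ih =>
        have h1 := hstep x n m'
        have h2 := dist_triangle (a x n m) (a x n m') (a x n (m' + 1))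
        have h3 : δ (n + (m' + 1)) ≤ δ (n + m') / 2 := hhalf (n + m')
        linarith
  have htail' : ∀ x n m m', m ≤ m' → dist (a x n m) (a x n m') ≤ δ (n + m) := by
    intro x n m m' hmm'
    have h1 := htail x n m m' hmm'
    have h2 := hδ0 (n + m')
    linarith
  have hcau : ∀ x n, CauchySeq (a x n) := by
    intro x n
    apply cauchySeq_of_le_tendsto_0 (fun N => δ (n + N))
    · intro i j N hNi hNj
      rcases le_total i j with h | h
      · exact le_trans (htail' x n i j h) (hδmono _ _ (by omega))
      · rw [dist_comm]
        exact le_trans (htail' x n j i h) (hδmono _ _ (by omega))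
    · apply squeeze_zero (fun N => (hδ0 (n + N)).le)
        (fun N => le_trans (hδ2 (n + N))
          (pow_le_pow_of_le_one (by norm_num) (by norm_num) (Nat.le_add_left N n)))
      exact tendsto_pow_atTop_nhds_zero_of_lt_one (by norm_num) (by norm_num)
  choose L hL using fun x n => cauchySeq_tendsto_of_complete (hcau x n)
  have hdistL : ∀ x n m, dist (a x n m) (L x n) ≤ δ (n + m) := by
    intro x n m
    refine le_of_tendsto (tendsto_const_nhds.dist (hL x n)) ?_
    filter_upwards [eventually_ge_atTop m] with m' hm'
    exact htail' x n m m' hm'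
  have hthread : ∀ x n, u n (L x (n + 1)) = L x n := by
    intro x n
    have h1 : Tendsto (fun m => u n (a x (n + 1) m)) atTop (𝓝 (u n (L x (n + 1)))) :=
      ((hu n).tendsto _).comp (hL x (n + 1))
    have h2 : ∀ m, u n (a x (n + 1) m) = a x n (m + 1) := by
      intro m
      exact iter_left_apply u x.1 n m
    simp only [h2] at h1
    have h3 : Tendsto (fun m => a x n (m + 1)) atTop (𝓝 (L x n)) :=
      (hL x n).comp (tendsto_add_atTop_nat 1)
    exact tendsto_nhds_unique h1 h3
  refine ⟨L, hL, hdistL, hthread, ?_⟩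
  intro n
  apply TendstoUniformly.continuous (F := fun m x => a x n m) (p := atTop)
  · rw [Metric.tendstoUniformly_iff]
    intro ε hε
    have hev : ∀ᶠ m : ℕ in atTop, ((1 : ℝ) / 2) ^ m < ε :=
      (tendsto_pow_atTop_nhds_zero_of_lt_one (by norm_num) (by norm_num)).eventually_lt_const hε
    filter_upwards [hev] with m hm x
    rw [dist_comm]
    calc dist (a x n m) (L x n) ≤ δ (n + m) := hdistL x n m
      _ ≤ (1 / 2 : ℝ) ^ (n + m) := hδ2 (n + m)
      _ ≤ (1 / 2 : ℝ) ^ m :=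
          pow_le_pow_of_le_one (by norm_num) (by norm_num) (Nat.le_add_left m n)
      _ < ε := hm
  · refine (Eventually.of_forall fun m => ?_).frequently
    exact (iter_cont u hu n m).comp ((continuous_apply (n + m)).comp continuous_subtype_val)

end BrownApprox

open BrownApprox Filter Topology in
/-- Brown's approximation theorem: if each bonding map `f_{i+1}` of an inverse sequence of
compact metric spaces can be approximated arbitrarily well by maps from a nonempty
collection `K_i` of continuous maps, then one may choose `g_i ∈ K_i` so that the two
inverse limits are homeomorphic. -/
theorem brown_approximation_inverse_limit
    (X : ℕ → Type) [∀ n, MetricSpace (X n)] [∀ n, CompactSpace (X n)]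
    (f : ∀ n, X (n + 1) → X n) (hf : ∀ n, Continuous (f n))
    (K : ∀ i, Set (X (i + 1) → X i))
    (hKne : ∀ i, (K i).Nonempty)
    (hKcont : ∀ i, ∀ g ∈ K i, Continuous g)
    (happrox : ∀ i, ∀ ε > (0 : ℝ), ∃ g ∈ K i, ∀ x, dist (f i x) (g x) < ε) :
    ∃ g : ∀ n, X (n + 1) → X n, (∀ i, g i ∈ K i) ∧
      Nonempty ({x : ∀ n, X n // ∀ n, f n (x (n + 1)) = x n} ≃ₜ
        {y : ∀ n, X n // ∀ n, g n (y (n + 1)) = y n}) := by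
  classical
  set pk := pick f K hf hKcont happrox with hpk
  set g : ∀ n, X (n + 1) → X n := fun n => (pk n).1.1 with hgdef
  set δ : ℕ → ℝ := fun n => (pk n).1.2 with hδdef
  have hgK : ∀ i, g i ∈ K i := fun i => (pk i).2.2
  have hspec : ∀ m, Good f K m (fun k _ => (pk k).1) (pk m).1 :=
    fun m => pick_spec f K hf hKcont happrox m
  have hδ0 : ∀ m, 0 < δ m := fun m => (pk m).2.1
  have hδ2 : ∀ m, δ m ≤ (1 / 2 : ℝ) ^ m := fun m => (hspec m).2.2.1
  have hhalf : ∀ j, δ (j + 1) ≤ δ j / 2 := fun j => (hspec (j + 1)).2.2.2.1 j (by omega)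
  have hgcont : ∀ n, Continuous (g n) := fun n => hKcont n _ (hgK n)
  -- `fill` agrees with `g`
  have hfg : ∀ n k (z : X (n + k)),
      iter (fill f (n + k) (fun j _ => (pk j).1)) n k z = iter g n k z := by
    intro n k z
    apply iter_congr
    intro j hj
    show (if h : j < n + k then ((pk j).1 : (X (j + 1) → X j) × ℝ).1 else f j) = g j
    rw [dif_pos hj]
  -- control of compositions at scale `δ`
  have hC3f : ∀ n m (z w : X (n + m)), dist z w ≤ δ (n + m) →
      dist (iter f n m z) (iter f n m w) ≤ (1 / 2 : ℝ) ^ (n + m) :=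
    fun n m z w h => ((hspec (n + m)).2.2.2.2.1 n m rfl z w h).1
  have hC3g : ∀ n m (z w : X (n + m)), dist z w ≤ δ (n + m) →
      dist (iter g n m z) (iter g n m w) ≤ (1 / 2 : ℝ) ^ (n + m) := by
    intro n m z w h
    have h2 := ((hspec (n + m)).2.2.2.2.1 n m rfl z w h).2
    rwa [hfg n m z, hfg n m w] at h2
  -- the step estimate
  have hC4 : ∀ n m (z : X (n + m + 1)),
      dist (iter f n m (f (n + m) z)) (iter f n m (g (n + m) z)) ≤ δ (n + m) / 2 ∧
      dist (iter g n m (f (n + m) z)) (iter g n m (g (n + m) z)) ≤ δ (n + m) / 2 := by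
    intro n m z
    obtain ⟨η, hη, happ, hmod⟩ := (hspec (n + m)).2.2.2.2.2
    have hd : dist (f (n + m) z) (g (n + m) z) ≤ η := happ z
    have h2 := hmod n m rfl (f (n + m) z) (g (n + m) z) hd
    obtain ⟨h2a, h2b⟩ := h2
    rw [hfg n m _, hfg n m _] at h2b
    exact ⟨h2a, h2b⟩
  -- limits in both directions
  obtain ⟨Φ₀, hΦten, hΦdist, hΦthr, hΦcont⟩ :=
    limit_construction g f hgcont δ hδ0 hδ2 hhalf (fun n m z => (hC4 n m z).2)
  obtain ⟨Ψ₀, hΨten, hΨdist, hΨthr, hΨcont⟩ :=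
    limit_construction f g hf δ hδ0 hδ2 hhalf
      (fun n m z => by rw [dist_comm]; exact (hC4 n m z).1)
  set Φ : {x : ∀ n, X n // ∀ n, f n (x (n + 1)) = x n} →
      {y : ∀ n, X n // ∀ n, g n (y (n + 1)) = y n} :=
    fun x => ⟨fun n => Φ₀ x n, fun n => hΦthr x n⟩ with hΦdef
  set Ψ : {y : ∀ n, X n // ∀ n, g n (y (n + 1)) = y n} →
      {x : ∀ n, X n // ∀ n, f n (x (n + 1)) = x n} :=
    fun y => ⟨fun n => Ψ₀ y n, fun n => hΨthr y n⟩ with hΨdef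
  have halfpow : Tendsto (fun m : ℕ => ((1 : ℝ) / 2) ^ m) atTop (𝓝 0) :=
    tendsto_pow_atTop_nhds_zero_of_lt_one (by norm_num) (by norm_num)
  have hbig : ∀ n, Tendsto (fun m : ℕ => ((1 : ℝ) / 2) ^ (n + m)) atTop (𝓝 0) := by
    intro n
    apply squeeze_zero (fun m => by positivity)
      (fun m => pow_le_pow_of_le_one (by norm_num) (by norm_num) (Nat.le_add_left m n))
    exact halfpow
  have hΨΦ : ∀ x, Ψ (Φ x) = x := by
    intro x
    apply Subtype.ext
    funext n
    have t1 : Tendsto (fun m => iter f n m ((Φ x).1 (n + m))) atTop (𝓝 (Ψ₀ (Φ x) n)) :=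
      hΨten (Φ x) n
    have t2 : Tendsto (fun m => iter f n m ((Φ x).1 (n + m))) atTop (𝓝 (x.1 n)) := by
      rw [tendsto_iff_dist_tendsto_zero]
      apply squeeze_zero (fun m => dist_nonneg) (g := fun m => ((1 : ℝ) / 2) ^ (n + m))
      · intro m
        have e2 : dist (Φ₀ x (n + m)) (x.1 (n + m)) ≤ δ (n + m) := by
          have := hΦdist x (n + m) 0
          rw [dist_comm]
          exact this
        have e3 := hC3f n m (Φ₀ x (n + m)) (x.1 (n + m)) e2
        rw [iter_thread f x.1 x.2 n m] at e3
        exact e3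
      · exact hbig n
    exact tendsto_nhds_unique t1 t2
  have hΦΨ : ∀ y, Φ (Ψ y) = y := by
    intro y
    apply Subtype.ext
    funext n
    have t1 : Tendsto (fun m => iter g n m ((Ψ y).1 (n + m))) atTop (𝓝 (Φ₀ (Ψ y) n)) :=
      hΦten (Ψ y) n
    have t2 : Tendsto (fun m => iter g n m ((Ψ y).1 (n + m))) atTop (𝓝 (y.1 n)) := by
      rw [tendsto_iff_dist_tendsto_zero]
      apply squeeze_zero (fun m => dist_nonneg) (g := fun m => ((1 : ℝ) / 2) ^ (n + m))
      · intro m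
        have e2 : dist (Ψ₀ y (n + m)) (y.1 (n + m)) ≤ δ (n + m) := by
          have := hΨdist y (n + m) 0
          rw [dist_comm]
          exact this
        have e3 := hC3g n m (Ψ₀ y (n + m)) (y.1 (n + m)) e2
        rw [iter_thread g y.1 y.2 n m] at e3
        exact e3
      · exact hbig n
    exact tendsto_nhds_unique t1 t2
  refine ⟨g, hgK, ⟨Homeomorph.mk ⟨Φ, Ψ, hΨΦ, hΦΨ⟩ ?_ ?_⟩⟩
  · exact Continuous.subtype_mk (continuous_pi fun n => hΦcont n) _
  · exact Continuous.subtype_mk (continuous_pi fun n => hΨcont n) _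
end
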